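/- arXiv:1508.06395 — 4 statements merged into one kernel-verified Lean document; each statement's English description precedes it below -/
import Mathlib

section
/- For n ≥ 1 and each i ∈ [n], let ρ_i be a bipartite distribution on U_i × V_i. Then Cor(ρ_1 ⊗ ⋯ ⊗ ρ_n) = max_{i∈[n]} Cor(ρ_i). -/
open scoped BigOperators ENNReal

namespace SR

variable {U V X Y : Type*}

/-- `μ` is a probability distribution on a finite type. -/
def IsDist {α : Type*} [Fintype α] (μ : α → ℝ) : Prop :=
  (∀ a, 0 ≤ μ a) ∧ ∑ a, μ a = 1

/-- Expectation of `f` under `μ`. -/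
def expect {α : Type*} [Fintype α] (μ : α → ℝ) (f : α → ℝ) : ℝ :=
  ∑ a, μ a * f a

/-- First (`U`-)marginal of a bipartite distribution. -/
def margFst [Fintype V] (ρ : U × V → ℝ) : U → ℝ :=
  fun u => ∑ v, ρ (u, v)

/-- Second (`V`-)marginal of a bipartite distribution. -/
def margSnd [Fintype U] (ρ : U × V → ℝ) : V → ℝ :=
  fun v => ∑ u, ρ (u, v)

/-- Maximum correlation of a bipartite distribution (sSup of the empty set is 0). -/
noncomputable def cor [Fintype U] [Fintype V] (ρ : U × V → ℝ) : ℝ :=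
  sSup { t : ℝ | ∃ (f : U → ℝ) (g : V → ℝ),
      expect (margFst ρ) f = 0 ∧ expect (margSnd ρ) g = 0 ∧
      expect (margFst ρ) (fun u => f u ^ 2) = 1 ∧
      expect (margSnd ρ) (fun v => g v ^ 2) = 1 ∧
      t = ∑ x : U × V, ρ x * (f x.1 * g x.2) }

/-- Tensor product of two bipartite distributions. -/
def tensor (ρ : U × V → ℝ) (σ : X × Y → ℝ) : (U × X) × (V × Y) → ℝ :=
  fun p => ρ (p.1.1, p.2.1) * σ (p.1.2, p.2.2)

/-- Tensor product of a family of bipartite distributions. -/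
def tensorPi {n : ℕ} {U V : Fin n → Type*} (ρ : ∀ i, U i × V i → ℝ) :
    (∀ i, U i) × (∀ i, V i) → ℝ :=
  fun p => ∏ i, ρ i (p.1 i, p.2 i)

/-- The distribution of `ℓ` i.i.d. samples from a bipartite distribution `ρ`. -/
def iid (ρ : U × V → ℝ) (ℓ : ℕ) : (Fin ℓ → U) × (Fin ℓ → V) → ℝ :=
  fun p => ∏ i, ρ (p.1 i, p.2 i)

/-- Agreement complexity of `ρ` at success probability `p`. -/
noncomputable def agr [Fintype U] [Fintype V] (ρ : U × V → ℝ) (p : ℝ) : ℝ :=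
  sInf { c : ℝ | ∃ (ℓ : ℕ) (f : (Fin ℓ → U) → ℝ) (g : (Fin ℓ → V) → ℝ),
      (∀ x, f x ∈ Set.Icc (0:ℝ) 1) ∧ (∀ y, g y ∈ Set.Icc (0:ℝ) 1) ∧
      p ≤ (∑ x : (Fin ℓ → U) × (Fin ℓ → V), iid ρ ℓ x * (f x.1 * g x.2)) ∧
      c = (∑ x : (Fin ℓ → U) × (Fin ℓ → V), iid ρ ℓ x * f x.1)
        + (∑ x : (Fin ℓ → U) × (Fin ℓ → V), iid ρ ℓ x * g x.2) }

/-- There is a `p`-collision protocol for `ρ` with domain size `n` and output size at most `k`.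
    The players may use private randomness (uniform over `Fin sA`, `Fin sB` weighted by
    distributions `μA`, `μB`, independent of everything else). -/
def ColLE [Fintype U] [Fintype V] (ρ : U × V → ℝ) (n : ℕ) (p : ℝ) (k : ℕ) : Prop :=
  ∃ (ℓ sA sB : ℕ) (μA : Fin sA → ℝ) (μB : Fin sB → ℝ)
    (A : (Fin ℓ → U) → Fin sA → Finset (Fin n))
    (B : (Fin ℓ → V) → Fin sB → Finset (Fin n)),
    IsDist μA ∧ IsDist μB ∧
    (∀ i : Fin n, p ≤ ∑ x : (Fin ℓ → U) × (Fin ℓ → V), ∑ rA, ∑ rB,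
        iid ρ ℓ x * (μA rA * μB rB) *
          (if i ∈ A x.1 rA ∧ i ∈ B x.2 rB then (1:ℝ) else 0)) ∧
    (∀ (x : (Fin ℓ → U) × (Fin ℓ → V)) (rA : Fin sA),
        0 < iid ρ ℓ x → 0 < μA rA → (A x.1 rA).card ≤ k) ∧
    (∀ (x : (Fin ℓ → U) × (Fin ℓ → V)) (rB : Fin sB),
        0 < iid ρ ℓ x → 0 < μB rB → (B x.2 rB).card ≤ k)

/-- Collision complexity `col_ρ(n, p)`, valued in `ℕ∞` (`sInf ∅ = ⊤`). -/
noncomputable def col [Fintype U] [Fintype V] (ρ : U × V → ℝ) (n : ℕ) (p : ℝ) : ℕ∞ :=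
  sInf { k : ℕ∞ | ∃ m : ℕ, k = (m : ℕ∞) ∧ ColLE ρ n p m }

/-- Base-2 Shannon entropy of a finitely supported distribution. -/
noncomputable def ent2 {α : Type*} [Fintype α] (μ : α → ℝ) : ℝ :=
  ∑ a, -(μ a * Real.logb 2 (μ a))

open Classical in
/-- Probability of an event under `μ`. -/
noncomputable def prEvent {Ω : Type*} [Fintype Ω] (μ : Ω → ℝ) (P : Ω → Prop) : ℝ :=
  ∑ ω, if P ω then μ ω else 0

/-- The distribution of a random variable `Z` conditioned on an event `P`. -/
noncomputable def condDist {Ω α : Type*} [Fintype Ω] (μ : Ω → ℝ) (Z : Ω → α)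
    (P : Ω → Prop) : α → ℝ :=
  fun a => prEvent μ (fun ω => Z ω = a ∧ P ω) / prEvent μ P

/-- The `L^r(μ)`-norm of a complex-valued function on a finite probability space. -/
noncomputable def lnorm {α : Type*} [Fintype α] (μ : α → ℝ) (r : ℝ) (h : α → ℂ) : ℝ :=
  (∑ a, μ a * ‖h a‖ ^ r) ^ (1 / r)

/-- The conditional-expectation operator `T_ρ` of a bipartite distribution. -/
noncomputable def condOp [Fintype U] [Fintype V] (ρ : U × V → ℝ) (f : U → ℂ) : V → ℂ :=
  fun v => ∑ u, ((ρ (u, v) / margSnd ρ v : ℝ) : ℂ) * f u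

/-- `ρ` is `q`-to-`p` hypercontractive. -/
def Hyper [Fintype U] [Fintype V] (ρ : U × V → ℝ) (q p : ℝ) : Prop :=
  ∀ f : U → ℂ, lnorm (margSnd ρ) q (condOp ρ f) ≤ lnorm (margFst ρ) p f

/-- Inner product over 𝔽₂. -/
def ipF2 {m : ℕ} (u v : Fin m → ZMod 2) : ZMod 2 := ∑ i, u i * v i

/-- `σ_{m,b}`: uniform distribution on pairs `(u,v) ∈ 𝔽₂^m × 𝔽₂^m` with `u·v = b`. -/
noncomputable def sigmaIP (m : ℕ) (b : ZMod 2) :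
    ((Fin m → ZMod 2) × (Fin m → ZMod 2)) → ℝ :=
  fun p => if ipF2 p.1 p.2 = b then
      (((Finset.univ.filter
        (fun q : (Fin m → ZMod 2) × (Fin m → ZMod 2) => ipF2 q.1 q.2 = b)).card : ℝ))⁻¹
    else 0

/-- `ρ_disj`: uniform distribution on `{(0,0),(0,1),(1,0)} ⊆ {0,1} × {0,1}`
    (with `false = 0`, `true = 1`). -/
noncomputable def rhoDisj : Bool × Bool → ℝ :=
  fun x => if x = (true, true) then 0 else 1/3


-- AUX START
section Aux
variable {U V : Type*}

lemma margFst_nonneg [Fintype U] [Fintype V] {ρ : U × V → ℝ} (hρ : IsDist ρ) (u : U) :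
    0 ≤ margFst ρ u := Finset.sum_nonneg fun v _ => hρ.1 (u, v)

lemma margSnd_nonneg [Fintype U] [Fintype V] {ρ : U × V → ℝ} (hρ : IsDist ρ) (v : V) :
    0 ≤ margSnd ρ v := Finset.sum_nonneg fun u _ => hρ.1 (u, v)

lemma sum_margFst [Fintype U] [Fintype V] {ρ : U × V → ℝ} (hρ : IsDist ρ) :
    ∑ u, margFst ρ u = 1 := by
  rw [← hρ.2, Fintype.sum_prod_type]; rfl

lemma sum_margSnd [Fintype U] [Fintype V] {ρ : U × V → ℝ} (hρ : IsDist ρ) :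
    ∑ v, margSnd ρ v = 1 := by
  rw [← hρ.2, Fintype.sum_prod_type_right]; rfl

lemma expect_sq_nonneg {α : Type*} [Fintype α] {μ : α → ℝ} (hμ : ∀ a, 0 ≤ μ a) (f : α → ℝ) :
    0 ≤ expect μ (fun a => f a ^ 2) :=
  Finset.sum_nonneg fun a _ => mul_nonneg (hμ a) (sq_nonneg _)

/-- Cauchy–Schwarz with weights. -/
lemma sum_mul_le [Fintype U] [Fintype V] {ρ : U × V → ℝ} (hρ : ∀ x, 0 ≤ ρ x)
    (α : U → ℝ) (β : V → ℝ) :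
    ∑ x : U × V, ρ x * (α x.1 * β x.2) ≤
      Real.sqrt (expect (margFst ρ) (fun u => α u ^ 2)) *
        Real.sqrt (expect (margSnd ρ) (fun v => β v ^ 2)) := by
  have h1 : ∑ x : U × V, ρ x * (α x.1 * β x.2)
      = ∑ x : U × V, (Real.sqrt (ρ x) * α x.1) * (Real.sqrt (ρ x) * β x.2) := by
    refine Finset.sum_congr rfl fun x _ => ?_
    rw [show (Real.sqrt (ρ x) * α x.1) * (Real.sqrt (ρ x) * β x.2)
        = (Real.sqrt (ρ x) * Real.sqrt (ρ x)) * (α x.1 * β x.2) by ring,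
      Real.mul_self_sqrt (hρ x)]
  have h2 : ∑ x : U × V, (Real.sqrt (ρ x) * α x.1) ^ 2
      = expect (margFst ρ) (fun u => α u ^ 2) := by
    rw [expect, Fintype.sum_prod_type]
    refine Finset.sum_congr rfl fun u _ => ?_
    rw [margFst, Finset.sum_mul]
    refine Finset.sum_congr rfl fun v _ => ?_
    rw [mul_pow, Real.sq_sqrt (hρ (u, v))]
  have h3 : ∑ x : U × V, (Real.sqrt (ρ x) * β x.2) ^ 2
      = expect (margSnd ρ) (fun v => β v ^ 2) := by
    rw [expect, Fintype.sum_prod_type_right]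
    refine Finset.sum_congr rfl fun v _ => ?_
    rw [margSnd, Finset.sum_mul]
    refine Finset.sum_congr rfl fun u _ => ?_
    rw [mul_pow, Real.sq_sqrt (hρ (u, v))]
  rw [h1, ← h2, ← h3]
  exact Real.sum_mul_le_sqrt_mul_sqrt _ _ _

/-- The defining set of `cor`. -/
def corSet [Fintype U] [Fintype V] (ρ : U × V → ℝ) : Set ℝ :=
  { t : ℝ | ∃ (f : U → ℝ) (g : V → ℝ),
      expect (margFst ρ) f = 0 ∧ expect (margSnd ρ) g = 0 ∧
      expect (margFst ρ) (fun u => f u ^ 2) = 1 ∧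
      expect (margSnd ρ) (fun v => g v ^ 2) = 1 ∧
      t = ∑ x : U × V, ρ x * (f x.1 * g x.2) }

lemma cor_eq [Fintype U] [Fintype V] (ρ : U × V → ℝ) : cor ρ = sSup (corSet ρ) := rfl

lemma corSet_bddAbove [Fintype U] [Fintype V] {ρ : U × V → ℝ} (hρ : IsDist ρ) :
    BddAbove (corSet ρ) := by
  refine ⟨1, fun t ht => ?_⟩
  obtain ⟨f, g, -, -, hf2, hg2, rfl⟩ := ht
  calc ∑ x : U × V, ρ x * (f x.1 * g x.2)
      ≤ Real.sqrt (expect (margFst ρ) (fun u => f u ^ 2)) *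
          Real.sqrt (expect (margSnd ρ) (fun v => g v ^ 2)) := sum_mul_le hρ.1 f g
    _ = 1 := by rw [hf2, hg2, Real.sqrt_one, mul_one]

lemma cor_nonneg [Fintype U] [Fintype V] {ρ : U × V → ℝ} (hρ : IsDist ρ) : 0 ≤ cor ρ := by
  rcases Set.eq_empty_or_nonempty (corSet ρ) with h | ⟨t, ht⟩
  · rw [cor_eq, h, Real.sSup_empty]
  · obtain ⟨f, g, hf0, hg0, hf2, hg2, rfl⟩ := ht
    have h1 : (∑ x : U × V, ρ x * (f x.1 * g x.2)) ≤ cor ρ :=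
      le_csSup (corSet_bddAbove hρ) ⟨f, g, hf0, hg0, hf2, hg2, rfl⟩
    have h2 : -(∑ x : U × V, ρ x * (f x.1 * g x.2)) ≤ cor ρ := by
      refine le_csSup (corSet_bddAbove hρ) ⟨-f, g, ?_, hg0, ?_, hg2, ?_⟩
      · simpa [expect, mul_comm, Finset.sum_neg_distrib] using hf0
      · simpa using hf2
      · rw [← Finset.sum_neg_distrib]
        exact Finset.sum_congr rfl fun x _ => by simp
    linarith

/-- the key bound from the definition of `cor`. -/
lemma corBound [Fintype U] [Fintype V] {ρ : U × V → ℝ} (hρ : IsDist ρ)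
    {f : U → ℝ} {g : V → ℝ} (hf : expect (margFst ρ) f = 0)
    (hg : expect (margSnd ρ) g = 0) :
    ∑ x : U × V, ρ x * (f x.1 * g x.2) ≤
      cor ρ * Real.sqrt (expect (margFst ρ) (fun u => f u ^ 2)) *
        Real.sqrt (expect (margSnd ρ) (fun v => g v ^ 2)) := by
  set Nf := expect (margFst ρ) (fun u => f u ^ 2) with hNf
  set Ng := expect (margSnd ρ) (fun v => g v ^ 2) with hNg
  have hNf0 : 0 ≤ Nf := expect_sq_nonneg (margFst_nonneg hρ) f
  have hNg0 : 0 ≤ Ng := expect_sq_nonneg (margSnd_nonneg hρ) g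
  rcases eq_or_lt_of_le hNf0 with hNf' | hNf'
  · have hz : ∀ x : U × V, ρ x * (f x.1 * g x.2) = 0 := by
      intro x
      rcases eq_or_lt_of_le (hρ.1 x) with h0 | h0
      · rw [← h0, zero_mul]
      · have hm : 0 < margFst ρ x.1 :=
          lt_of_lt_of_le h0 (Finset.single_le_sum (f := fun v => ρ (x.1, v))
            (fun v _ => hρ.1 (x.1, v)) (Finset.mem_univ x.2))
        have h2 : margFst ρ x.1 * f x.1 ^ 2 = 0 := by
          have := (Finset.sum_eq_zero_iff_of_nonneg
            (fun u _ => mul_nonneg (margFst_nonneg hρ u) (sq_nonneg (f u)))).1 hNf'.symm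
          exact this x.1 (Finset.mem_univ _)
        have hf0' : f x.1 = 0 := by
          have := (mul_eq_zero.1 h2).resolve_left (ne_of_gt hm)
          exact pow_eq_zero_iff (n := 2) (by norm_num) |>.1 this
        rw [hf0']; ring
    rw [Finset.sum_congr rfl (fun x _ => hz x), Finset.sum_const_zero, ← hNf',
      Real.sqrt_zero, mul_zero, zero_mul]
  rcases eq_or_lt_of_le hNg0 with hNg' | hNg'
  · have hz : ∀ x : U × V, ρ x * (f x.1 * g x.2) = 0 := by
      intro x
      rcases eq_or_lt_of_le (hρ.1 x) with h0 | h0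
      · rw [← h0, zero_mul]
      · have hm : 0 < margSnd ρ x.2 :=
          lt_of_lt_of_le h0 (Finset.single_le_sum (f := fun u => ρ (u, x.2))
            (fun u _ => hρ.1 (u, x.2)) (Finset.mem_univ x.1))
        have h2 : margSnd ρ x.2 * g x.2 ^ 2 = 0 := by
          have := (Finset.sum_eq_zero_iff_of_nonneg
            (fun v _ => mul_nonneg (margSnd_nonneg hρ v) (sq_nonneg (g v)))).1 hNg'.symm
          exact this x.2 (Finset.mem_univ _)
        have hg0' : g x.2 = 0 := by
          have := (mul_eq_zero.1 h2).resolve_left (ne_of_gt hm)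
          exact pow_eq_zero_iff (n := 2) (by norm_num) |>.1 this
        rw [hg0']; ring
    rw [Finset.sum_congr rfl (fun x _ => hz x), Finset.sum_const_zero, ← hNg',
      Real.sqrt_zero, mul_zero]
  have hα : 0 < Real.sqrt Nf := Real.sqrt_pos.2 hNf'
  have hβ : 0 < Real.sqrt Ng := Real.sqrt_pos.2 hNg'
  set α := Real.sqrt Nf
  set β := Real.sqrt Ng
  have hα2 : α ^ 2 = Nf := Real.sq_sqrt hNf0
  have hβ2 : β ^ 2 = Ng := Real.sq_sqrt hNg0
  have hmem : (∑ x : U × V, ρ x * (f x.1 * g x.2)) / (α * β) ∈ corSet ρ := by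
    refine ⟨fun u => f u / α, fun v => g v / β, ?_, ?_, ?_, ?_, ?_⟩
    · rw [expect]
      simp_rw [← mul_div_assoc, ← Finset.sum_div]
      rw [expect] at hf; rw [hf, zero_div]
    · rw [expect]
      simp_rw [← mul_div_assoc, ← Finset.sum_div]
      rw [expect] at hg; rw [hg, zero_div]
    · rw [expect]
      simp_rw [div_pow, ← mul_div_assoc, ← Finset.sum_div]
      rw [expect] at hNf
      rw [← hNf, ← hα2]
      exact div_self (by positivity)
    · rw [expect]
      simp_rw [div_pow, ← mul_div_assoc, ← Finset.sum_div]
      rw [expect] at hNg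
      rw [← hNg, ← hβ2]
      exact div_self (by positivity)
    · rw [Finset.sum_div]
      refine Finset.sum_congr rfl fun x _ => ?_
      field_simp
  have hle : (∑ x : U × V, ρ x * (f x.1 * g x.2)) / (α * β) ≤ cor ρ :=
    le_csSup (corSet_bddAbove hρ) hmem
  calc ∑ x : U × V, ρ x * (f x.1 * g x.2)
      = ((∑ x : U × V, ρ x * (f x.1 * g x.2)) / (α * β)) * (α * β) := by
        field_simp
    _ ≤ cor ρ * (α * β) := by
        exact mul_le_mul_of_nonneg_right hle (by positivity)
    _ = cor ρ * α * β := by ring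

/-- elementary 2-dimensional Cauchy–Schwarz -/
lemma four_cs {p q r s : ℝ} (hp : 0 ≤ p) (hq : 0 ≤ q) (hr : 0 ≤ r) (hs : 0 ≤ s) :
    p * q + r * s ≤ Real.sqrt (p ^ 2 + r ^ 2) * Real.sqrt (q ^ 2 + s ^ 2) := by
  have h1 : (p * q + r * s) ^ 2 ≤ (p ^ 2 + r ^ 2) * (q ^ 2 + s ^ 2) := by
    nlinarith [sq_nonneg (p * s - r * q)]
  calc p * q + r * s = Real.sqrt ((p * q + r * s) ^ 2) :=
        (Real.sqrt_sq (by positivity)).symm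
    _ ≤ Real.sqrt ((p ^ 2 + r ^ 2) * (q ^ 2 + s ^ 2)) := Real.sqrt_le_sqrt h1
    _ = _ := Real.sqrt_mul (by positivity) _

end Aux

section PiAux

/-- factor out one coordinate. -/
lemma sum_pi_factor {ι : Type*} [Fintype ι] [DecidableEq ι] {W : ι → Type*}
    [∀ i, Fintype (W i)] (m : ∀ i, W i → ℝ) (hm : ∀ i, ∑ a, m i a = 1)
    (i₀ : ι) (φ : W i₀ → ℝ) :
    ∑ w : ∀ i, W i, (∏ i, m i (w i)) * φ (w i₀) = ∑ a, m i₀ a * φ a := by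
  rw [← Equiv.sum_comp (Equiv.piSplitAt i₀ W).symm, Fintype.sum_prod_type]
  have key : ∀ (a : W i₀) (r : ∀ j : {j // j ≠ i₀}, W j),
      (∏ i, m i ((Equiv.piSplitAt i₀ W).symm (a, r) i))
        = m i₀ a * ∏ j : {j // j ≠ i₀}, m j (r j) := by
    intro a r
    rw [← Finset.mul_prod_erase Finset.univ _ (Finset.mem_univ i₀)]
    congr 1
    · simp
    · rw [Finset.prod_subtype (Finset.univ.erase i₀)
        (p := fun j => j ≠ i₀) (fun x => by simp)]
      refine Finset.prod_congr rfl fun j _ => ?_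
      congr 1
      simp [Equiv.piSplitAt_symm_apply, dif_neg j.2]
  have key2 : ∀ (a : W i₀) (r : ∀ j : {j // j ≠ i₀}, W j),
      ((Equiv.piSplitAt i₀ W).symm (a, r) i₀) = a := by
    intro a r; simp
  calc ∑ a, ∑ r : ∀ j : {j // j ≠ i₀}, W j,
        (∏ i, m i ((Equiv.piSplitAt i₀ W).symm (a, r) i)) *
          φ ((Equiv.piSplitAt i₀ W).symm (a, r) i₀)
      = ∑ a, ∑ r : ∀ j : {j // j ≠ i₀}, W j,
        (m i₀ a * φ a) * ∏ j : {j // j ≠ i₀}, m j (r j) := by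
        refine Finset.sum_congr rfl fun a _ => Finset.sum_congr rfl fun r _ => ?_
        rw [key a r, key2 a r]; ring
    _ = ∑ a, (m i₀ a * φ a) *
          ∑ r : ∀ j : {j // j ≠ i₀}, W j, ∏ j : {j // j ≠ i₀}, m j (r j) := by
        simp_rw [← Finset.mul_sum]
    _ = ∑ a, m i₀ a * φ a := by
        refine Finset.sum_congr rfl fun a _ => ?_
        rw [← Fintype.prod_sum]
        simp [hm]

/-- pairing equiv for pi of products. -/
def piProd {ι : Type*} (U V : ι → Type*) : (∀ i, U i × V i) ≃ (∀ i, U i) × (∀ i, V i) where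
  toFun w := (fun i => (w i).1, fun i => (w i).2)
  invFun p := fun i => (p.1 i, p.2 i)
  left_inv _ := rfl
  right_inv _ := rfl

variable {n : ℕ} {U V : Fin n → Type*} [∀ i, Fintype (U i)] [∀ i, Fintype (V i)]

lemma margFst_tensorPi (ρ : ∀ i, U i × V i → ℝ) (u : ∀ i, U i) :
    margFst (tensorPi ρ) u = ∏ i, margFst (ρ i) (u i) := by
  show ∑ v : ∀ i, V i, ∏ i, ρ i (u i, v i) = _
  rw [← Fintype.prod_sum (f := fun i b => ρ i (u i, b))]
  rfl

lemma margSnd_tensorPi (ρ : ∀ i, U i × V i → ℝ) (v : ∀ i, V i) :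
    margSnd (tensorPi ρ) v = ∏ i, margSnd (ρ i) (v i) := by
  show ∑ u : ∀ i, U i, ∏ i, ρ i (u i, v i) = _
  rw [← Fintype.prod_sum (f := fun i a => ρ i (a, v i))]
  rfl

lemma isDist_tensorPi {ρ : ∀ i, U i × V i → ℝ} (hρ : ∀ i, IsDist (ρ i)) :
    IsDist (tensorPi ρ) := by
  constructor
  · intro p
    exact Finset.prod_nonneg fun i _ => (hρ i).1 _
  · rw [Fintype.sum_prod_type]
    calc ∑ u : ∀ i, U i, ∑ v : ∀ i, V i, tensorPi ρ (u, v)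
        = ∑ u : ∀ i, U i, ∏ i, margFst (ρ i) (u i) := by
          refine Finset.sum_congr rfl fun u _ => ?_
          rw [← margFst_tensorPi ρ u]; rfl
      _ = ∏ i, ∑ a, margFst (ρ i) a := by rw [← Fintype.prod_sum]
      _ = 1 := by
          rw [Finset.prod_eq_one]
          intro i _
          exact sum_margFst (hρ i)

lemma expect_margFst_coord {ρ : ∀ i, U i × V i → ℝ} (hρ : ∀ i, IsDist (ρ i))
    (i₀ : Fin n) (φ : U i₀ → ℝ) :
    ∑ u : ∀ i, U i, margFst (tensorPi ρ) u * φ (u i₀)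
      = ∑ a, margFst (ρ i₀) a * φ a := by
  calc ∑ u : ∀ i, U i, margFst (tensorPi ρ) u * φ (u i₀)
      = ∑ u : ∀ i, U i, (∏ i, margFst (ρ i) (u i)) * φ (u i₀) := by
        refine Finset.sum_congr rfl fun u _ => ?_
        rw [margFst_tensorPi]
    _ = ∑ a, margFst (ρ i₀) a * φ a :=
        sum_pi_factor _ (fun i => sum_margFst (hρ i)) i₀ φ

lemma expect_margSnd_coord {ρ : ∀ i, U i × V i → ℝ} (hρ : ∀ i, IsDist (ρ i))
    (i₀ : Fin n) (φ : V i₀ → ℝ) :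
    ∑ v : ∀ i, V i, margSnd (tensorPi ρ) v * φ (v i₀)
      = ∑ b, margSnd (ρ i₀) b * φ b := by
  calc ∑ v : ∀ i, V i, margSnd (tensorPi ρ) v * φ (v i₀)
      = ∑ v : ∀ i, V i, (∏ i, margSnd (ρ i) (v i)) * φ (v i₀) := by
        refine Finset.sum_congr rfl fun v _ => ?_
        rw [margSnd_tensorPi]
    _ = ∑ b, margSnd (ρ i₀) b * φ b :=
        sum_pi_factor _ (fun i => sum_margSnd (hρ i)) i₀ φ

lemma sum_tensorPi_coord {ρ : ∀ i, U i × V i → ℝ} (hρ : ∀ i, IsDist (ρ i))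
    (i₀ : Fin n) (φ : U i₀ → ℝ) (ψ : V i₀ → ℝ) :
    ∑ x : (∀ i, U i) × (∀ i, V i), tensorPi ρ x * (φ (x.1 i₀) * ψ (x.2 i₀))
      = ∑ y : U i₀ × V i₀, ρ i₀ y * (φ y.1 * ψ y.2) := by
  rw [← Equiv.sum_comp (piProd U V)
    (fun x => tensorPi ρ x * (φ (x.1 i₀) * ψ (x.2 i₀)))]
  have h : ∀ w : ∀ i, U i × V i,
      tensorPi ρ (piProd U V w) * (φ ((piProd U V w).1 i₀) * ψ ((piProd U V w).2 i₀))
        = (∏ i, ρ i (w i)) * ((fun y : U i₀ × V i₀ => φ y.1 * ψ y.2) (w i₀)) :=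
    fun w => rfl
  rw [Finset.sum_congr rfl fun w _ => h w,
    sum_pi_factor (fun i => ρ i) (fun i => (hρ i).2) i₀
      (fun y : U i₀ × V i₀ => φ y.1 * ψ y.2)]

/-- splitting a sum over an `(n+1)`-fold pi type. -/
lemma sum_cons_split {m : ℕ} {W : Fin (m + 1) → Type*} [∀ i, Fintype (W i)]
    (F : (∀ i, W i) → ℝ) :
    ∑ w : ∀ i, W i, F w = ∑ a : W 0, ∑ x : ∀ i : Fin m, W i.succ, F (Fin.cons a x) := by
  rw [← Equiv.sum_comp (Fin.consEquiv W) F, Fintype.sum_prod_type]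
  rfl

end PiAux
-- AUX END

-- KEY START
lemma tensor_cor_bound : ∀ (n : ℕ) (U V : Fin n → Type)
    [∀ i, Fintype (U i)] [∀ i, Fintype (V i)]
    (ρ : ∀ i, (U i × V i) → ℝ), (∀ i, IsDist (ρ i)) → ∀ (M : ℝ), 0 ≤ M →
    (∀ i, cor (ρ i) ≤ M) → ∀ (f : (∀ i, U i) → ℝ) (g : (∀ i, V i) → ℝ),
    expect (margFst (tensorPi ρ)) f = 0 → expect (margSnd (tensorPi ρ)) g = 0 →
    ∑ x : (∀ i, U i) × (∀ i, V i), tensorPi ρ x * (f x.1 * g x.2)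
      ≤ M * Real.sqrt (expect (margFst (tensorPi ρ)) (fun u => f u ^ 2))
          * Real.sqrt (expect (margSnd (tensorPi ρ)) (fun v => g v ^ 2)) := by
  intro n
  induction n with
  | zero =>
    intro U V instU instV ρ hρ M hM hcor f g hf hg
    have hz : ∑ x : (∀ i, U i) × (∀ i, V i), tensorPi ρ x * (f x.1 * g x.2) = 0 := by
      have hf0 : ∀ u : ∀ i, U i, f u = 0 := by
        intro u
        have : expect (margFst (tensorPi ρ)) f = f u := by
          rw [expect]
          rw [Finset.univ_unique, Finset.sum_singleton]
          have h1 : margFst (tensorPi ρ) default = 1 := by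
            rw [margFst, Finset.univ_unique, Finset.sum_singleton]
            show (∏ i : Fin 0, _) = 1
            exact Finset.prod_of_isEmpty _
          rw [h1, one_mul, Subsingleton.elim default u]
        rw [← this, hf]
      refine Finset.sum_eq_zero fun x _ => ?_
      rw [hf0 x.1]; ring
    rw [hz]
    have h1 : 0 ≤ Real.sqrt (expect (margFst (tensorPi ρ)) fun u => f u ^ 2) :=
      Real.sqrt_nonneg _
    have h2 : 0 ≤ Real.sqrt (expect (margSnd (tensorPi ρ)) fun v => g v ^ 2) :=
      Real.sqrt_nonneg _
    positivity
  | succ m ih =>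
    intro U V instU instV ρ hρ M hM hcor f g hf hg
    set ρ' : ∀ i : Fin m, (U i.succ × V i.succ) → ℝ := fun i => ρ i.succ with hρ'def
    have hρ' : ∀ i, IsDist (ρ' i) := fun i => hρ i.succ
    have hT : IsDist (tensorPi ρ') := isDist_tensorPi hρ'
    have h0 : IsDist (ρ 0) := hρ 0
    set mF0 : U 0 → ℝ := margFst (ρ 0) with hmF0
    set mS0 : V 0 → ℝ := margSnd (ρ 0) with hmS0
    set mFT : (∀ i : Fin m, U i.succ) → ℝ := margFst (tensorPi ρ') with hmFT
    set mST : (∀ i : Fin m, V i.succ) → ℝ := margSnd (tensorPi ρ') with hmST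
    have sum_mFT : ∑ x, mFT x = 1 := sum_margFst hT
    have sum_mST : ∑ y, mST y = 1 := sum_margSnd hT
    have mFT_nn : ∀ x, 0 ≤ mFT x := margFst_nonneg hT
    have mST_nn : ∀ y, 0 ≤ mST y := margSnd_nonneg hT
    -- splitting of marginals
    have hsplitF : ∀ (a : U 0) (x : ∀ i : Fin m, U i.succ),
        margFst (tensorPi ρ) (Fin.cons a x) = mF0 a * mFT x := by
      intro a x
      rw [margFst_tensorPi, Fin.prod_univ_succ, hmFT, margFst_tensorPi]
      simp
      rfl
    have hsplitS : ∀ (b : V 0) (y : ∀ i : Fin m, V i.succ),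
        margSnd (tensorPi ρ) (Fin.cons b y) = mS0 b * mST y := by
      intro b y
      rw [margSnd_tensorPi, Fin.prod_univ_succ, hmST, margSnd_tensorPi]
      simp
      rfl
    have hsplitT : ∀ (a : U 0) (b : V 0) (x : ∀ i : Fin m, U i.succ)
        (y : ∀ i : Fin m, V i.succ),
        tensorPi ρ (Fin.cons a x, Fin.cons b y) = ρ 0 (a, b) * tensorPi ρ' (x, y) := by
      intro a b x y
      show ∏ i : Fin (m + 1), ρ i (Fin.cons a x i, Fin.cons b y i) = _
      rw [Fin.prod_univ_succ]
      simp [tensorPi]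
      exact Or.inl rfl
    -- expectation splitting
    have hexpF : ∀ h : (∀ i, U i) → ℝ,
        expect (margFst (tensorPi ρ)) h
          = ∑ a, mF0 a * ∑ x, mFT x * h (Fin.cons a x) := by
      intro h
      rw [expect, sum_cons_split (F := fun u => margFst (tensorPi ρ) u * h u)]
      refine Finset.sum_congr rfl fun a _ => ?_
      rw [Finset.mul_sum]
      refine Finset.sum_congr rfl fun x _ => ?_
      rw [hsplitF]; ring
    have hexpS : ∀ h : (∀ i, V i) → ℝ,
        expect (margSnd (tensorPi ρ)) h
          = ∑ b, mS0 b * ∑ y, mST y * h (Fin.cons b y) := by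
      intro h
      rw [expect, sum_cons_split (F := fun v => margSnd (tensorPi ρ) v * h v)]
      refine Finset.sum_congr rfl fun b _ => ?_
      rw [Finset.mul_sum]
      refine Finset.sum_congr rfl fun y _ => ?_
      rw [hsplitS]; ring
    -- conditional means and residuals
    set A : U 0 → ℝ := fun a => ∑ x, mFT x * f (Fin.cons a x) with hA
    set B : V 0 → ℝ := fun b => ∑ y, mST y * g (Fin.cons b y) with hB
    set fr : U 0 → (∀ i : Fin m, U i.succ) → ℝ :=
      fun a x => f (Fin.cons a x) - A a with hfr
    set gr : V 0 → (∀ i : Fin m, V i.succ) → ℝ :=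
      fun b y => g (Fin.cons b y) - B b with hgr
    have F2 : ∀ a, ∑ x, mFT x * fr a x = 0 := by
      intro a
      simp only [hfr, mul_sub]
      rw [Finset.sum_sub_distrib, ← Finset.sum_mul, sum_mFT, one_mul]
      exact sub_self (A a)
    have G2 : ∀ b, ∑ y, mST y * gr b y = 0 := by
      intro b
      simp only [hgr, mul_sub]
      rw [Finset.sum_sub_distrib, ← Finset.sum_mul, sum_mST, one_mul]
      exact sub_self (B b)
    have hfA : expect mF0 A = 0 := by
      rw [expect]
      rw [hexpF f] at hf
      exact hf
    have hgB : expect mS0 B = 0 := by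
      rw [expect]
      rw [hexpS g] at hg
      exact hg
    -- Pythagoras
    have hPythF : expect (margFst (tensorPi ρ)) (fun u => f u ^ 2)
        = expect mF0 (fun a => A a ^ 2)
          + ∑ a, mF0 a * (∑ x, mFT x * fr a x ^ 2) := by
      rw [hexpF (fun u => f u ^ 2), expect, ← Finset.sum_add_distrib]
      refine Finset.sum_congr rfl fun a _ => ?_
      rw [← mul_add]
      congr 1
      have hfx : ∀ x, f (Fin.cons a x) = A a + fr a x := fun x => by simp [hfr]
      calc ∑ x, mFT x * f (Fin.cons a x) ^ 2
          = ∑ x, (mFT x * A a ^ 2 + (2 * A a) * (mFT x * fr a x)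
              + mFT x * fr a x ^ 2) := by
            refine Finset.sum_congr rfl fun x _ => ?_
            rw [hfx x]; ring
        _ = A a ^ 2 + ∑ x, mFT x * fr a x ^ 2 := by
            rw [Finset.sum_add_distrib, Finset.sum_add_distrib, ← Finset.sum_mul,
              sum_mFT, one_mul, ← Finset.mul_sum, F2 a, mul_zero, add_zero]
    have hPythG : expect (margSnd (tensorPi ρ)) (fun v => g v ^ 2)
        = expect mS0 (fun b => B b ^ 2)
          + ∑ b, mS0 b * (∑ y, mST y * gr b y ^ 2) := by
      rw [hexpS (fun v => g v ^ 2), expect, ← Finset.sum_add_distrib]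
      refine Finset.sum_congr rfl fun b _ => ?_
      rw [← mul_add]
      congr 1
      have hgy : ∀ y, g (Fin.cons b y) = B b + gr b y := fun y => by simp [hgr]
      calc ∑ y, mST y * g (Fin.cons b y) ^ 2
          = ∑ y, (mST y * B b ^ 2 + (2 * B b) * (mST y * gr b y)
              + mST y * gr b y ^ 2) := by
            refine Finset.sum_congr rfl fun y _ => ?_
            rw [hgy y]; ring
        _ = B b ^ 2 + ∑ y, mST y * gr b y ^ 2 := by
            rw [Finset.sum_add_distrib, Finset.sum_add_distrib, ← Finset.sum_mul,
              sum_mST, one_mul, ← Finset.mul_sum, G2 b, mul_zero, add_zero]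
    -- inner sums
    have hTfr : ∀ a, ∑ z : (∀ i : Fin m, U i.succ) × (∀ i : Fin m, V i.succ),
        tensorPi ρ' z * fr a z.1 = 0 := by
      intro a
      rw [Fintype.sum_prod_type]
      have : ∀ x, ∑ y, tensorPi ρ' (x, y) * fr a x = mFT x * fr a x := by
        intro x
        rw [← Finset.sum_mul]; rfl
      rw [Finset.sum_congr rfl fun x _ => this x, F2 a]
    have hTgr : ∀ b, ∑ z : (∀ i : Fin m, U i.succ) × (∀ i : Fin m, V i.succ),
        tensorPi ρ' z * gr b z.2 = 0 := by
      intro b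
      rw [Fintype.sum_prod_type_right]
      have : ∀ y, ∑ x, tensorPi ρ' (x, y) * gr b y = mST y * gr b y := by
        intro y
        rw [← Finset.sum_mul]; rfl
      rw [Finset.sum_congr rfl fun y _ => this y, G2 b]
    have hinner : ∀ a b,
        ∑ z : (∀ i : Fin m, U i.succ) × (∀ i : Fin m, V i.succ),
          tensorPi ρ' z * (f (Fin.cons a z.1) * g (Fin.cons b z.2))
        = A a * B b + ∑ z : (∀ i : Fin m, U i.succ) × (∀ i : Fin m, V i.succ),
            tensorPi ρ' z * (fr a z.1 * gr b z.2) := by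
      intro a b
      have hfx : ∀ x, f (Fin.cons a x) = A a + fr a x := fun x => by simp [hfr]
      have hgy : ∀ y, g (Fin.cons b y) = B b + gr b y := fun y => by simp [hgr]
      calc ∑ z : (∀ i : Fin m, U i.succ) × (∀ i : Fin m, V i.succ),
            tensorPi ρ' z * (f (Fin.cons a z.1) * g (Fin.cons b z.2))
          = ∑ z : (∀ i : Fin m, U i.succ) × (∀ i : Fin m, V i.succ),
            ((A a * B b) * tensorPi ρ' z + (A a) * (tensorPi ρ' z * gr b z.2)
              + (B b) * (tensorPi ρ' z * fr a z.1)
              + tensorPi ρ' z * (fr a z.1 * gr b z.2)) := by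
            refine Finset.sum_congr rfl fun z _ => ?_
            rw [hfx z.1, hgy z.2]; ring
        _ = A a * B b + ∑ z : (∀ i : Fin m, U i.succ) × (∀ i : Fin m, V i.succ),
              tensorPi ρ' z * (fr a z.1 * gr b z.2) := by
            rw [Finset.sum_add_distrib, Finset.sum_add_distrib, Finset.sum_add_distrib,
              ← Finset.mul_sum, ← Finset.mul_sum, ← Finset.mul_sum,
              hT.2, mul_one, hTgr b, hTfr a, mul_zero, mul_zero, add_zero, add_zero]
    -- main decomposition
    have hS : ∑ x : (∀ i, U i) × (∀ i, V i), tensorPi ρ x * (f x.1 * g x.2)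
        = ∑ y : U 0 × V 0, ρ 0 y * (A y.1 * B y.2)
          + ∑ y : U 0 × V 0, ρ 0 y *
            (∑ z : (∀ i : Fin m, U i.succ) × (∀ i : Fin m, V i.succ),
              tensorPi ρ' z * (fr y.1 z.1 * gr y.2 z.2)) := by
      rw [Fintype.sum_prod_type]
      calc ∑ u : ∀ i, U i, ∑ v : ∀ i, V i, tensorPi ρ (u, v) * (f u * g v)
          = ∑ a : U 0, ∑ x : ∀ i : Fin m, U i.succ, ∑ b : V 0,
              ∑ y : ∀ i : Fin m, V i.succ,
              tensorPi ρ (Fin.cons a x, Fin.cons b y) *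
                (f (Fin.cons a x) * g (Fin.cons b y)) := by
            rw [sum_cons_split (F := fun u => ∑ v : ∀ i, V i,
              tensorPi ρ (u, v) * (f u * g v))]
            refine Finset.sum_congr rfl fun a _ => Finset.sum_congr rfl fun x _ => ?_
            rw [sum_cons_split (F := fun v =>
              tensorPi ρ (Fin.cons a x, v) * (f (Fin.cons a x) * g v))]
        _ = ∑ a : U 0, ∑ b : V 0, ρ 0 (a, b) *
              ∑ z : (∀ i : Fin m, U i.succ) × (∀ i : Fin m, V i.succ),
                tensorPi ρ' z * (f (Fin.cons a z.1) * g (Fin.cons b z.2)) := by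
            refine Finset.sum_congr rfl fun a _ => ?_
            rw [Finset.sum_comm]
            refine Finset.sum_congr rfl fun b _ => ?_
            rw [Fintype.sum_prod_type, Finset.mul_sum]
            refine Finset.sum_congr rfl fun x _ => ?_
            rw [Finset.mul_sum]
            refine Finset.sum_congr rfl fun y _ => ?_
            rw [hsplitT]; ring
        _ = ∑ a : U 0, ∑ b : V 0, (ρ 0 (a, b) * (A a * B b)
              + ρ 0 (a, b) * ∑ z : (∀ i : Fin m, U i.succ) × (∀ i : Fin m, V i.succ),
                  tensorPi ρ' z * (fr a z.1 * gr b z.2)) := by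
            refine Finset.sum_congr rfl fun a _ => Finset.sum_congr rfl fun b _ => ?_
            rw [hinner a b, mul_add]
        _ = _ := by
            rw [Fintype.sum_prod_type (f := fun y : U 0 × V 0 => ρ 0 y * (A y.1 * B y.2)),
              Fintype.sum_prod_type (f := fun y : U 0 × V 0 => ρ 0 y * _),
              ← Finset.sum_add_distrib]
            refine Finset.sum_congr rfl fun a _ => ?_
            rw [← Finset.sum_add_distrib]
    -- bounding the two terms
    set α : U 0 → ℝ := fun a => Real.sqrt (∑ x, mFT x * fr a x ^ 2) with hαdef
    set β : V 0 → ℝ := fun b => Real.sqrt (∑ y, mST y * gr b y ^ 2) with hβdef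
    have hα2 : ∀ a, α a ^ 2 = ∑ x, mFT x * fr a x ^ 2 := fun a =>
      Real.sq_sqrt (Finset.sum_nonneg fun x _ => mul_nonneg (mFT_nn x) (sq_nonneg _))
    have hβ2 : ∀ b, β b ^ 2 = ∑ y, mST y * gr b y ^ 2 := fun b =>
      Real.sq_sqrt (Finset.sum_nonneg fun y _ => mul_nonneg (mST_nn y) (sq_nonneg _))
    have hT1 : ∑ y : U 0 × V 0, ρ 0 y * (A y.1 * B y.2)
        ≤ M * (Real.sqrt (expect mF0 fun a => A a ^ 2) *
            Real.sqrt (expect mS0 fun b => B b ^ 2)) := by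
      calc ∑ y : U 0 × V 0, ρ 0 y * (A y.1 * B y.2)
          ≤ cor (ρ 0) * Real.sqrt (expect mF0 fun a => A a ^ 2) *
              Real.sqrt (expect mS0 fun b => B b ^ 2) := corBound h0 hfA hgB
        _ ≤ M * (Real.sqrt (expect mF0 fun a => A a ^ 2) *
              Real.sqrt (expect mS0 fun b => B b ^ 2)) := by
            rw [mul_assoc]
            exact mul_le_mul_of_nonneg_right (hcor 0) (by positivity)
    have hIH : ∀ a b, ∑ z : (∀ i : Fin m, U i.succ) × (∀ i : Fin m, V i.succ),
        tensorPi ρ' z * (fr a z.1 * gr b z.2) ≤ M * α a * β b := by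
      intro a b
      exact ih _ _ ρ' hρ' M hM (fun i => hcor i.succ) (fr a) (gr b) (F2 a) (G2 b)
    have hT2 : ∑ y : U 0 × V 0, ρ 0 y *
          (∑ z : (∀ i : Fin m, U i.succ) × (∀ i : Fin m, V i.succ),
            tensorPi ρ' z * (fr y.1 z.1 * gr y.2 z.2))
        ≤ M * (Real.sqrt (expect mF0 fun a => α a ^ 2) *
            Real.sqrt (expect mS0 fun b => β b ^ 2)) := by
      calc ∑ y : U 0 × V 0, ρ 0 y *
            (∑ z : (∀ i : Fin m, U i.succ) × (∀ i : Fin m, V i.succ),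
              tensorPi ρ' z * (fr y.1 z.1 * gr y.2 z.2))
          ≤ ∑ y : U 0 × V 0, ρ 0 y * (M * α y.1 * β y.2) :=
            Finset.sum_le_sum fun y _ =>
              mul_le_mul_of_nonneg_left (hIH y.1 y.2) (h0.1 y)
        _ = M * ∑ y : U 0 × V 0, ρ 0 y * (α y.1 * β y.2) := by
            rw [Finset.mul_sum]
            exact Finset.sum_congr rfl fun y _ => by ring
        _ ≤ M * (Real.sqrt (expect mF0 fun a => α a ^ 2) *
              Real.sqrt (expect mS0 fun b => β b ^ 2)) :=
            mul_le_mul_of_nonneg_left (sum_mul_le h0.1 α β) hM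
    -- assemble
    have hEα : expect mF0 (fun a => α a ^ 2)
        = ∑ a, mF0 a * (∑ x, mFT x * fr a x ^ 2) := by
      rw [expect]
      exact Finset.sum_congr rfl fun a _ => by rw [hα2 a]
    have hEβ : expect mS0 (fun b => β b ^ 2)
        = ∑ b, mS0 b * (∑ y, mST y * gr b y ^ 2) := by
      rw [expect]
      exact Finset.sum_congr rfl fun b _ => by rw [hβ2 b]
    have hsA : Real.sqrt (expect mF0 fun a => A a ^ 2) ^ 2
        = expect mF0 (fun a => A a ^ 2) :=
      Real.sq_sqrt (expect_sq_nonneg (margFst_nonneg h0) A)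
    have hsB : Real.sqrt (expect mS0 fun b => B b ^ 2) ^ 2
        = expect mS0 (fun b => B b ^ 2) :=
      Real.sq_sqrt (expect_sq_nonneg (margSnd_nonneg h0) B)
    have hsα : Real.sqrt (expect mF0 fun a => α a ^ 2) ^ 2
        = expect mF0 (fun a => α a ^ 2) :=
      Real.sq_sqrt (expect_sq_nonneg (margFst_nonneg h0) α)
    have hsβ : Real.sqrt (expect mS0 fun b => β b ^ 2) ^ 2
        = expect mS0 (fun b => β b ^ 2) :=
      Real.sq_sqrt (expect_sq_nonneg (margSnd_nonneg h0) β)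
    have hfour : Real.sqrt (expect mF0 fun a => A a ^ 2) *
          Real.sqrt (expect mS0 fun b => B b ^ 2)
        + Real.sqrt (expect mF0 fun a => α a ^ 2) *
          Real.sqrt (expect mS0 fun b => β b ^ 2)
        ≤ Real.sqrt (expect (margFst (tensorPi ρ)) (fun u => f u ^ 2)) *
            Real.sqrt (expect (margSnd (tensorPi ρ)) (fun v => g v ^ 2)) := by
      have h4 := four_cs (Real.sqrt_nonneg (expect mF0 fun a => A a ^ 2))
        (Real.sqrt_nonneg (expect mS0 fun b => B b ^ 2))
        (Real.sqrt_nonneg (expect mF0 fun a => α a ^ 2))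
        (Real.sqrt_nonneg (expect mS0 fun b => β b ^ 2))
      rw [hsA, hsB, hsα, hsβ] at h4
      rw [hPythF, hPythG, ← hEα, ← hEβ]
      exact h4
    calc ∑ x : (∀ i, U i) × (∀ i, V i), tensorPi ρ x * (f x.1 * g x.2)
        = ∑ y : U 0 × V 0, ρ 0 y * (A y.1 * B y.2)
          + ∑ y : U 0 × V 0, ρ 0 y *
            (∑ z : (∀ i : Fin m, U i.succ) × (∀ i : Fin m, V i.succ),
              tensorPi ρ' z * (fr y.1 z.1 * gr y.2 z.2)) := hS
      _ ≤ M * (Real.sqrt (expect mF0 fun a => A a ^ 2) *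
            Real.sqrt (expect mS0 fun b => B b ^ 2))
          + M * (Real.sqrt (expect mF0 fun a => α a ^ 2) *
            Real.sqrt (expect mS0 fun b => β b ^ 2)) := add_le_add hT1 hT2
      _ = M * (Real.sqrt (expect mF0 fun a => A a ^ 2) *
            Real.sqrt (expect mS0 fun b => B b ^ 2)
          + Real.sqrt (expect mF0 fun a => α a ^ 2) *
            Real.sqrt (expect mS0 fun b => β b ^ 2)) := by ring
      _ ≤ M * (Real.sqrt (expect (margFst (tensorPi ρ)) (fun u => f u ^ 2)) *
            Real.sqrt (expect (margSnd (tensorPi ρ)) (fun v => g v ^ 2))) :=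
          mul_le_mul_of_nonneg_left hfour hM
      _ = M * Real.sqrt (expect (margFst (tensorPi ρ)) (fun u => f u ^ 2)) *
            Real.sqrt (expect (margSnd (tensorPi ρ)) (fun v => g v ^ 2)) := by ring
-- KEY END


theorem stmt1 {n : ℕ} (hn : 0 < n) (U V : Fin n → Type)
    [∀ i, Fintype (U i)] [∀ i, Fintype (V i)] [∀ i, Nonempty (U i)] [∀ i, Nonempty (V i)]
    (ρ : ∀ i, (U i × V i) → ℝ) (hρ : ∀ i, IsDist (ρ i)) :
    cor (tensorPi ρ)
      = Finset.univ.sup' ⟨⟨0, hn⟩, Finset.mem_univ _⟩ (fun i => cor (ρ i)) := by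
  have hTd : IsDist (tensorPi ρ) := isDist_tensorPi hρ
  set M := Finset.univ.sup' ⟨⟨0, hn⟩, Finset.mem_univ _⟩ (fun i => cor (ρ i)) with hMdef
  have hM0 : 0 ≤ M :=
    le_trans (cor_nonneg (hρ ⟨0, hn⟩))
      (Finset.le_sup' (f := fun i => cor (ρ i)) (Finset.mem_univ ⟨0, hn⟩))
  apply le_antisymm
  · rw [cor_eq]
    apply Real.sSup_le _ hM0
    intro t ht
    obtain ⟨f, g, hf0, hg0, hf2, hg2, rfl⟩ := ht
    have h := tensor_cor_bound n U V ρ hρ M hM0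
      (fun i => Finset.le_sup' (f := fun j => cor (ρ j)) (Finset.mem_univ i)) f g hf0 hg0
    rw [hf2, hg2, Real.sqrt_one, mul_one, mul_one] at h
    exact h
  · apply Finset.sup'_le
    intro i _
    rw [cor_eq (ρ i)]
    apply Real.sSup_le _ (cor_nonneg hTd)
    intro t ht
    obtain ⟨f, g, hf0, hg0, hf2, hg2, rfl⟩ := ht
    rw [cor_eq (tensorPi ρ)]
    apply le_csSup (corSet_bddAbove hTd)
    refine ⟨fun u => f (u i), fun v => g (v i), ?_, ?_, ?_, ?_, ?_⟩
    · show ∑ u, margFst (tensorPi ρ) u * f (u i) = 0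
      rw [expect_margFst_coord hρ i f]
      exact hf0
    · show ∑ v, margSnd (tensorPi ρ) v * g (v i) = 0
      rw [expect_margSnd_coord hρ i g]
      exact hg0
    · show ∑ u, margFst (tensorPi ρ) u * (f (u i)) ^ 2 = 1
      rw [expect_margFst_coord hρ i (fun a => f a ^ 2)]
      exact hf2
    · show ∑ v, margSnd (tensorPi ρ) v * (g (v i)) ^ 2 = 1
      rw [expect_margSnd_coord hρ i (fun b => g b ^ 2)]
      exact hg2
    · exact (sum_tensorPi_coord hρ i f g).symm


end SR
end

section
/- Let n ≥ 1, let C ≥ 0 be a real number, let X = (X_1, …, X_n) be uniformly distributed over {0,1}^n, and let M be a random variable on the same finite probability space taking at most 2^C distinct values. For each value m in the support of M, let L(m) = {i ∈ [n] : H(X_i | M = m) < 1/2}. Then for every real t ≥ 0, Pr[|L(M)| ≥ t] ≤ 2^{C − t/2}. -/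
open scoped BigOperators ENNReal

namespace SR

variable {U V X Y : Type*}

section Aux

lemma prEvent_nonneg {Ω : Type*} [Fintype Ω] {μ : Ω → ℝ} (h : ∀ ω, 0 ≤ μ ω) (P : Ω → Prop) :
    0 ≤ prEvent μ P := by
  refine Finset.sum_nonneg fun ω _ => ?_
  split
  · exact h ω
  · exact le_rfl

lemma prEvent_mono {Ω : Type*} [Fintype Ω] {μ : Ω → ℝ} (h : ∀ ω, 0 ≤ μ ω) {P Q : Ω → Prop}
    (hPQ : ∀ ω, P ω → Q ω) : prEvent μ P ≤ prEvent μ Q := by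
  refine Finset.sum_le_sum fun ω _ => ?_
  by_cases hP : P ω
  · simp [hP, hPQ ω hP]
  · simp only [hP, if_false]
    split
    · exact h ω
    · exact le_rfl

lemma prEvent_eq_sum_filter {Ω : Type*} [Fintype Ω] (μ : Ω → ℝ) (P : Ω → Prop)
    [DecidablePred P] : prEvent μ P = ∑ ω ∈ Finset.univ.filter P, μ ω := by
  rw [Finset.sum_filter]
  refine Finset.sum_congr rfl fun ω _ => ?_
  by_cases h : P ω <;> simp [h]

lemma prEvent_def {Ω : Type*} [Fintype Ω] (μ : Ω → ℝ) (P : Ω → Prop) [DecidablePred P] :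
    prEvent μ P = ∑ ω, if P ω then μ ω else 0 := by
  unfold prEvent
  refine Finset.sum_congr rfl fun ω _ => ?_
  by_cases h : P ω <;> simp [h]

/-- Gibbs' inequality. -/
lemma gibbs {α : Type*} [Fintype α] (μ ν : α → ℝ) (hμ : IsDist μ)
    (hν0 : ∀ a, 0 ≤ ν a) (hν1 : ∑ a, ν a ≤ 1)
    (hac : ∀ a, 0 < μ a → 0 < ν a) :
    ent2 μ ≤ ∑ a, -(μ a * Real.logb 2 (ν a)) := by
  have hlog2 : (0:ℝ) < Real.log 2 := Real.log_pos one_lt_two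
  have key : ∀ a, μ a * Real.logb 2 (ν a) - μ a * Real.logb 2 (μ a)
      ≤ (ν a - μ a) / Real.log 2 := by
    intro a
    rcases eq_or_lt_of_le (hμ.1 a) with h0 | h0
    · rw [← h0]
      simp only [zero_mul, sub_zero, sub_self]
      exact div_nonneg (hν0 a) hlog2.le
    · have hνa := hac a h0
      have hd : Real.logb 2 (ν a) - Real.logb 2 (μ a)
          = Real.log (ν a / μ a) / Real.log 2 := by
        rw [Real.log_div (ne_of_gt hνa) (ne_of_gt h0)]
        simp [Real.logb, sub_div]
      calc μ a * Real.logb 2 (ν a) - μ a * Real.logb 2 (μ a)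
          = μ a * (Real.log (ν a / μ a) / Real.log 2) := by rw [← mul_sub, hd]
        _ ≤ μ a * ((ν a / μ a - 1) / Real.log 2) := by
            have hle := Real.log_le_sub_one_of_pos (div_pos hνa h0)
            gcongr
        _ = (ν a - μ a) / Real.log 2 := by
            field_simp
  have hsum : ∑ a, μ a * Real.logb 2 (ν a) - ∑ a, μ a * Real.logb 2 (μ a) ≤ 0 := by
    rw [← Finset.sum_sub_distrib]
    calc ∑ a, (μ a * Real.logb 2 (ν a) - μ a * Real.logb 2 (μ a))
        ≤ ∑ a, (ν a - μ a) / Real.log 2 := Finset.sum_le_sum fun a _ => key a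
      _ = ((∑ a, ν a) - 1) / Real.log 2 := by
          rw [← Finset.sum_div, Finset.sum_sub_distrib, hμ.2]
      _ ≤ 0 := div_nonpos_of_nonpos_of_nonneg (by linarith) hlog2.le
  have e2 : ent2 μ = -∑ a, μ a * Real.logb 2 (μ a) := by
    unfold ent2
    rw [Finset.sum_neg_distrib]
  have e3 : ∑ a, -(μ a * Real.logb 2 (ν a)) = -∑ a, μ a * Real.logb 2 (ν a) :=
    Finset.sum_neg_distrib _
  rw [e2, e3]
  linarith

/-- Min-entropy lower bound on Shannon entropy. -/
lemma ent2_ge {α : Type*} [Fintype α] (μ : α → ℝ) (hμ : IsDist μ) {c : ℝ} (hc : 0 < c)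
    (h : ∀ a, μ a ≤ c) : -Real.logb 2 c ≤ ent2 μ := by
  have key : ∀ a, μ a * (-Real.logb 2 c) ≤ -(μ a * Real.logb 2 (μ a)) := by
    intro a
    rcases eq_or_lt_of_le (hμ.1 a) with h0 | h0
    · simp [← h0]
    · have hlog : Real.logb 2 (μ a) ≤ Real.logb 2 c :=
        (Real.logb_le_logb one_lt_two h0 hc).mpr (h a)
      nlinarith [h0.le]
  calc -Real.logb 2 c = (∑ a, μ a) * (-Real.logb 2 c) := by rw [hμ.2, one_mul]
    _ = ∑ a, μ a * (-Real.logb 2 c) := Finset.sum_mul ..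
    _ ≤ ∑ a, -(μ a * Real.logb 2 (μ a)) := Finset.sum_le_sum fun a _ => key a
    _ = ent2 μ := rfl

lemma ent2_bool_le_one (μ : Bool → ℝ) (hμ : IsDist μ) : ent2 μ ≤ 1 := by
  have h := gibbs μ (fun _ => (2:ℝ)⁻¹) hμ (fun _ => by norm_num)
    (by norm_num) (fun a _ => by norm_num)
  have e : ∑ a : Bool, -(μ a * Real.logb 2 (2:ℝ)⁻¹) = 1 := by
    simp only [Real.logb_inv, Real.logb_self_eq_one one_lt_two, mul_neg, mul_one, neg_neg]
    exact hμ.2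
  linarith

/-- Coordinate marginal on the hypercube. -/
noncomputable def margC {n : ℕ} (μ : (Fin n → Bool) → ℝ) (i : Fin n) : Bool → ℝ :=
  fun a => ∑ x : Fin n → Bool, if x i = a then μ x else 0

lemma margC_nonneg {n : ℕ} {μ : (Fin n → Bool) → ℝ} (h : ∀ x, 0 ≤ μ x) (i : Fin n) (a : Bool) :
    0 ≤ margC μ i a := by
  refine Finset.sum_nonneg fun x _ => ?_
  split
  · exact h x
  · exact le_rfl

lemma le_margC {n : ℕ} {μ : (Fin n → Bool) → ℝ} (h : ∀ x, 0 ≤ μ x) (i : Fin n)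
    (x : Fin n → Bool) : μ x ≤ margC μ i (x i) := by
  have hnn : ∀ x' ∈ Finset.univ, (0:ℝ) ≤ if x' i = x i then μ x' else 0 := by
    intro x' _
    split
    · exact h x'
    · exact le_rfl
  have hs := Finset.single_le_sum
    (f := fun x' : Fin n → Bool => if x' i = x i then μ x' else 0) hnn (Finset.mem_univ x)
  simpa [margC] using hs

lemma margC_isDist {n : ℕ} {μ : (Fin n → Bool) → ℝ} (hμ : IsDist μ) (i : Fin n) :
    IsDist (margC μ i) := by
  refine ⟨margC_nonneg hμ.1 i, ?_⟩
  unfold margC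
  rw [Finset.sum_comm]
  simpa using hμ.2

/-- Subadditivity of entropy on the hypercube. -/
lemma ent2_subadd {n : ℕ} (μ : (Fin n → Bool) → ℝ) (hμ : IsDist μ) :
    ent2 μ ≤ ∑ i, ent2 (margC μ i) := by
  classical
  have hν0 : ∀ x : Fin n → Bool, 0 ≤ ∏ i, margC μ i (x i) :=
    fun x => Finset.prod_nonneg fun i _ => margC_nonneg hμ.1 i (x i)
  have hν1 : ∑ x : Fin n → Bool, ∏ i, margC μ i (x i) ≤ 1 := by
    have hps : ∏ i : Fin n, ∑ a : Bool, margC μ i a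
        = ∑ x : Fin n → Bool, ∏ i, margC μ i (x i) := by
      rw [Finset.prod_univ_sum, Fintype.piFinset_univ]
    rw [← hps, Finset.prod_congr rfl (fun i _ => (margC_isDist hμ i).2)]
    simp
  have hac : ∀ x : Fin n → Bool, 0 < μ x → 0 < ∏ i, margC μ i (x i) := by
    intro x hx
    exact Finset.prod_pos fun i _ => lt_of_lt_of_le hx (le_margC hμ.1 i x)
  have h := gibbs μ (fun x => ∏ i, margC μ i (x i)) hμ hν0 hν1 hac
  have e1 : ∑ x : Fin n → Bool, -(μ x * Real.logb 2 (∏ i, margC μ i (x i)))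
      = ∑ x : Fin n → Bool, ∑ i, μ x * (-Real.logb 2 (margC μ i (x i))) := by
    refine Finset.sum_congr rfl fun x _ => ?_
    rcases eq_or_lt_of_le (hμ.1 x) with h0 | h0
    · simp [← h0]
    · have hne : ∀ i ∈ Finset.univ, margC μ i (x i) ≠ 0 :=
        fun i _ => (lt_of_lt_of_le h0 (le_margC hμ.1 i x)).ne'
      rw [Real.logb_prod _ _ hne, Finset.mul_sum, ← Finset.sum_neg_distrib]
      exact Finset.sum_congr rfl fun i _ => by ring
  have e3 : ∀ i : Fin n, ∑ x : Fin n → Bool, μ x * (-Real.logb 2 (margC μ i (x i)))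
      = ent2 (margC μ i) := by
    intro i
    have he : ent2 (margC μ i) = ∑ a, margC μ i a * (-Real.logb 2 (margC μ i a)) := by
      unfold ent2
      exact Finset.sum_congr rfl fun a _ => by ring
    rw [he]
    rw [Finset.sum_congr rfl (fun a _ => show margC μ i a * (-Real.logb 2 (margC μ i a))
      = ∑ x : Fin n → Bool, (if x i = a then μ x else 0) * (-Real.logb 2 (margC μ i a)) from by
        rw [← Finset.sum_mul]
        rfl)]
    rw [Finset.sum_comm]
    refine Finset.sum_congr rfl fun x _ => ?_
    rw [Finset.sum_eq_single (x i)]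
    · simp
    · intro b _ hb
      simp [Ne.symm hb]
    · intro hmem
      exact absurd (Finset.mem_univ _) hmem
  rw [e1, Finset.sum_comm] at h
  calc ent2 μ ≤ ∑ i, ∑ x : Fin n → Bool, μ x * (-Real.logb 2 (margC μ i (x i))) := h
    _ = ∑ i, ent2 (margC μ i) := Finset.sum_congr rfl fun i _ => e3 i

lemma condDist_isDist {Ω α : Type*} [Fintype Ω] [Fintype α] (μ : Ω → ℝ) (hμ0 : ∀ ω, 0 ≤ μ ω)
    (Z : Ω → α) (P : Ω → Prop) (hp : 0 < prEvent μ P) : IsDist (condDist μ Z P) := by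
  classical
  constructor
  · intro a
    exact div_nonneg (prEvent_nonneg hμ0 _) hp.le
  · unfold condDist
    rw [← Finset.sum_div, div_eq_one_iff_eq hp.ne']
    unfold prEvent
    rw [Finset.sum_comm]
    refine Finset.sum_congr rfl fun ω _ => ?_
    by_cases hP : P ω
    · simp [hP]
    · simp [hP]

lemma condDist_margC {Ω : Type*} [Fintype Ω] (μ : Ω → ℝ) {n : ℕ} (X : Ω → (Fin n → Bool))
    (P : Ω → Prop) (i : Fin n) :
    margC (condDist μ X P) i = condDist μ (fun ω => X ω i) P := by
  classical
  funext a
  unfold margC condDist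
  rw [show (∑ x : Fin n → Bool, if x i = a then
        prEvent μ (fun ω => X ω = x ∧ P ω) / prEvent μ P else 0)
      = (∑ x : Fin n → Bool, if x i = a then
        prEvent μ (fun ω => X ω = x ∧ P ω) else 0) / prEvent μ P by
    rw [Finset.sum_div]
    refine Finset.sum_congr rfl fun x _ => ?_
    split <;> simp]
  congr 1
  rw [Finset.sum_congr rfl (fun x _ =>
    show (if x i = a then prEvent μ (fun ω => X ω = x ∧ P ω) else 0)
      = ∑ ω, if x i = a then (if X ω = x ∧ P ω then μ ω else 0) else 0 from by
        split_ifs with h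
        · rw [prEvent_def]
        · simp)]
  rw [Finset.sum_comm]
  refine Finset.sum_congr rfl fun ω _ => ?_
  rw [Finset.sum_eq_single (X ω)]
  · by_cases hP : P ω <;> by_cases hXa : X ω i = a <;> simp [hP, hXa]
  · intro x _ hx
    simp [Ne.symm hx]
  · intro hmem
    exact absurd (Finset.mem_univ _) hmem

lemma sum_split {n : ℕ} (e : Fin n → ℝ) (hone : ∀ i, e i ≤ 1) :
    ∑ i, e i ≤ (n : ℝ) - (({i : Fin n | e i < 1/2} : Set (Fin n)).ncard : ℝ) / 2 := by
  classical
  have hncard : ({i : Fin n | e i < 1/2} : Set (Fin n)).ncard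
      = (Finset.univ.filter (fun i => e i < 1/2)).card := by
    rw [← Set.ncard_coe_finset]
    congr 1
    ext i
    simp
  rw [hncard]
  rw [← Finset.sum_filter_add_sum_filter_not Finset.univ (fun i => e i < 1/2) e]
  have hA : ∑ i ∈ Finset.univ.filter (fun i => e i < 1/2), e i
      ≤ ((Finset.univ.filter (fun i => e i < 1/2)).card : ℝ) * (1/2) := by
    have hs := Finset.sum_le_card_nsmul (Finset.univ.filter (fun i => e i < 1/2)) e (1/2)
      (fun i hi => (Finset.mem_filter.mp hi).2.le)
    simpa [nsmul_eq_mul] using hs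
  have hB : ∑ i ∈ Finset.univ.filter (fun i => ¬ e i < 1/2), e i
      ≤ ((Finset.univ.filter (fun i => ¬ e i < 1/2)).card : ℝ) * 1 := by
    have hs := Finset.sum_le_card_nsmul (Finset.univ.filter (fun i => ¬ e i < 1/2)) e 1
      (fun i _ => hone i)
    simpa [nsmul_eq_mul] using hs
  have hcards : (Finset.univ.filter (fun i => e i < 1/2)).card
      + (Finset.univ.filter (fun i => ¬ e i < 1/2)).card = n := by
    rw [Finset.card_filter_add_card_filter_not]
    simp
  have hcast : ((Finset.univ.filter (fun i => ¬ e i < 1/2)).card : ℝ)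
      = (n : ℝ) - ((Finset.univ.filter (fun i => e i < 1/2)).card : ℝ) := by
    have := congrArg (fun k : ℕ => (k : ℝ)) hcards
    push_cast at this
    linarith
  rw [hcast] at hB
  linarith

/-- The key per-message bound. -/
lemma key_bound {Ω : Type*} [Fintype Ω] (μ : Ω → ℝ) (hμ : IsDist μ) {n : ℕ}
    (X : Ω → (Fin n → Bool)) (P : Ω → Prop)
    (hX : ∀ x : Fin n → Bool, prEvent μ (fun ω => X ω = x) = 1 / 2 ^ n)
    (hp : 0 < prEvent μ P) :
    prEvent μ P ≤ (2:ℝ) ^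
      (-((({i : Fin n | ent2 (condDist μ (fun ω => X ω i) P) < 1/2} :
          Set (Fin n)).ncard : ℝ)) / 2) := by
  classical
  have hνdist : IsDist (condDist μ X P) := condDist_isDist μ hμ.1 X P hp
  have hc : (0:ℝ) < (1 / 2 ^ n) / prEvent μ P := by positivity
  have hνle : ∀ x, condDist μ X P x ≤ (1 / 2 ^ n) / prEvent μ P := by
    intro x
    unfold condDist
    have hnum : prEvent μ (fun ω => X ω = x ∧ P ω) ≤ 1 / 2 ^ n := by
      rw [← hX x]
      exact prEvent_mono hμ.1 (fun ω h => h.1)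
    gcongr
  have hlogc : Real.logb 2 ((1 / 2 ^ n) / prEvent μ P)
      = -(n : ℝ) - Real.logb 2 (prEvent μ P) := by
    rw [Real.logb_div (by positivity) hp.ne', one_div, Real.logb_inv,
      Real.logb_pow, Real.logb_self_eq_one one_lt_two]
    ring
  have h1 : (n : ℝ) + Real.logb 2 (prEvent μ P) ≤ ent2 (condDist μ X P) := by
    have := ent2_ge (condDist μ X P) hνdist hc hνle
    rw [hlogc] at this
    linarith
  have h2 : ent2 (condDist μ X P) ≤ ∑ i, ent2 (condDist μ (fun ω => X ω i) P) := by
    have hs := ent2_subadd (condDist μ X P) hνdist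
    rw [Finset.sum_congr rfl (fun i _ => by rw [condDist_margC μ X P i])] at hs
    exact hs
  have h3 : ∑ i, ent2 (condDist μ (fun ω => X ω i) P)
      ≤ (n : ℝ) - (({i : Fin n | ent2 (condDist μ (fun ω => X ω i) P) < 1/2} :
          Set (Fin n)).ncard : ℝ) / 2 := by
    have hone : ∀ i, ent2 (condDist μ (fun ω => X ω i) P) ≤ 1 :=
      fun i => ent2_bool_le_one _ (condDist_isDist μ hμ.1 _ P hp)
    exact sum_split _ hone
  have hlog : Real.logb 2 (prEvent μ P)
      ≤ -((({i : Fin n | ent2 (condDist μ (fun ω => X ω i) P) < 1/2} :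
          Set (Fin n)).ncard : ℝ)) / 2 := by
    linarith
  calc prEvent μ P = (2:ℝ) ^ Real.logb 2 (prEvent μ P) :=
        (Real.rpow_logb two_pos (by norm_num) hp).symm
    _ ≤ _ := (Real.rpow_le_rpow_left_iff one_lt_two).mpr hlog

end Aux

theorem stmt3 {Ω M' : Type} [Fintype Ω] [Fintype M'] [DecidableEq M']
    (μ : Ω → ℝ) (hμ : IsDist μ) (n : ℕ) (hn : 1 ≤ n) (C : ℝ) (hC : 0 ≤ C)
    (X : Ω → (Fin n → Bool)) (M : Ω → M')
    (hX : ∀ x : Fin n → Bool, prEvent μ (fun ω => X ω = x) = 1 / 2 ^ n)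
    (hM : ((Finset.univ.image M).card : ℝ) ≤ (2:ℝ) ^ C)
    (t : ℝ) (ht : 0 ≤ t) :
    prEvent μ (fun ω =>
        t ≤ (({i : Fin n |
            ent2 (condDist μ (fun ω' => X ω' i) (fun ω' => M ω' = M ω)) < 1/2} :
              Set (Fin n)).ncard : ℝ))
      ≤ (2:ℝ) ^ (C - t/2) := by
  classical
  set F : M' → ℝ := fun m =>
    (({i : Fin n | ent2 (condDist μ (fun ω' => X ω' i) (fun ω' => M ω' = m)) < 1/2} :
        Set (Fin n)).ncard : ℝ) with hF
  show prEvent μ (fun ω => t ≤ F (M ω)) ≤ (2:ℝ) ^ (C - t/2)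
  have key : ∀ m : M',
      (if t ≤ F m then prEvent μ (fun ω => M ω = m) else 0) ≤ (2:ℝ) ^ (-t/2) := by
    intro m
    split_ifs with hm
    · rcases eq_or_lt_of_le (prEvent_nonneg hμ.1 (fun ω => M ω = m)) with h0 | h0
      · rw [← h0]
        positivity
      · calc prEvent μ (fun ω => M ω = m) ≤ (2:ℝ) ^ (-(F m) / 2) :=
              key_bound μ hμ X _ hX h0
          _ ≤ (2:ℝ) ^ (-t/2) := by
              apply (Real.rpow_le_rpow_left_iff one_lt_two).mpr
              linarith
    · positivity
  have grouped : prEvent μ (fun ω => t ≤ F (M ω))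
      = ∑ m ∈ Finset.univ.image M, ∑ ω ∈ Finset.univ.filter (fun ω => M ω = m),
          (if t ≤ F (M ω) then μ ω else 0) :=
    (Finset.sum_fiberwise_of_maps_to
      (fun ω _ => Finset.mem_image_of_mem M (Finset.mem_univ ω)) _).symm
  rw [grouped]
  have bound : ∀ m ∈ Finset.univ.image M,
      ∑ ω ∈ Finset.univ.filter (fun ω => M ω = m), (if t ≤ F (M ω) then μ ω else 0)
      ≤ (2:ℝ) ^ (-t/2) := by
    intro m _
    by_cases hc : t ≤ F m
    · have e : ∑ ω ∈ Finset.univ.filter (fun ω => M ω = m), (if t ≤ F (M ω) then μ ω else 0)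
          = prEvent μ (fun ω => M ω = m) := by
        rw [prEvent_eq_sum_filter]
        refine Finset.sum_congr rfl fun ω hω => ?_
        rw [(Finset.mem_filter.mp hω).2, if_pos hc]
      rw [e]
      rcases eq_or_lt_of_le (prEvent_nonneg hμ.1 (fun ω => M ω = m)) with h0 | h0
      · rw [← h0]
        positivity
      · calc prEvent μ (fun ω => M ω = m) ≤ (2:ℝ) ^ (-(F m) / 2) :=
              key_bound μ hμ X _ hX h0
          _ ≤ (2:ℝ) ^ (-t/2) := by
              apply (Real.rpow_le_rpow_left_iff one_lt_two).mpr
              linarith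
    · have e : ∀ ω ∈ Finset.univ.filter (fun ω => M ω = m),
          (if t ≤ F (M ω) then μ ω else 0) = 0 := by
        intro ω hω
        rw [(Finset.mem_filter.mp hω).2, if_neg hc]
      rw [Finset.sum_congr rfl e, Finset.sum_const, smul_zero]
      positivity
  calc ∑ m ∈ Finset.univ.image M, ∑ ω ∈ Finset.univ.filter (fun ω => M ω = m),
        (if t ≤ F (M ω) then μ ω else 0)
      ≤ ∑ _m ∈ Finset.univ.image M, (2:ℝ) ^ (-t/2) := Finset.sum_le_sum bound
    _ = ((Finset.univ.image M).card : ℝ) * (2:ℝ) ^ (-t/2) := by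
        rw [Finset.sum_const, nsmul_eq_mul]
    _ ≤ (2:ℝ) ^ C * (2:ℝ) ^ (-t/2) := by
        have hpos : (0:ℝ) ≤ (2:ℝ) ^ (-t/2) := by positivity
        exact mul_le_mul_of_nonneg_right hM hpos
    _ = (2:ℝ) ^ (C - t/2) := by
        rw [← Real.rpow_add two_pos]
        ring_nf

end SR
end

section
/- Let ρ be a bipartite distribution on U × V, let n ≥ 1, let 0 ≤ p ≤ 1, and let m ≥ 1 be an integer. Then col_ρ(n, 1−(1−p)^m) ≤ m · col_ρ(n, p), where the inequality is interpreted in ℕ ∪ {∞}. -/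
open scoped BigOperators ENNReal

namespace SR

variable {U V X Y : Type*}

lemma sum_pi_prod {m : ℕ} {γ : Type*} [Fintype γ] (G : Fin m → γ → ℝ) :
    ∑ c : Fin m → γ, ∏ j, G j (c j) = ∏ j, ∑ g, G j g := by
  rw [Finset.prod_univ_sum]
  simp [Fintype.piFinset_univ]

def sp {α : Type*} (m ℓ : ℕ) (x : Fin (m*ℓ) → α) (j : Fin m) : Fin ℓ → α :=
  fun i => x (finProdFinEquiv (j, i))

noncomputable def dc (s m : ℕ) (r : Fin (s^m)) : Fin m → Fin s :=
  finFunctionFinEquiv.symm r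

lemma sum_split_s4 {α : Type*} [Fintype α] (m ℓ : ℕ) (H : (Fin m → Fin ℓ → α) → ℝ) :
    ∑ x : Fin (m*ℓ) → α, H (sp m ℓ x) = ∑ a : Fin m → Fin ℓ → α, H a :=
  Fintype.sum_equiv ((Equiv.arrowCongr finProdFinEquiv (Equiv.refl α)).symm.trans
    (Equiv.curry _ _ _)) _ _ (fun _ => rfl)

lemma sum_dec {s m : ℕ} (H : (Fin m → Fin s) → ℝ) :
    ∑ r : Fin (s^m), H (dc s m r) = ∑ c : Fin m → Fin s, H c :=
  Fintype.sum_equiv finFunctionFinEquiv.symm _ _ (fun _ => rfl)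

lemma master_sum {U V : Type*} [Fintype U] [Fintype V] {m ℓ sA sB : ℕ}
    (G : ((Fin ℓ → U) × (Fin ℓ → V)) → Fin sA → Fin sB → ℝ) :
    (∑ x : (Fin (m*ℓ) → U) × (Fin (m*ℓ) → V), ∑ rA : Fin (sA^m), ∑ rB : Fin (sB^m),
      ∏ j : Fin m, G (sp m ℓ x.1 j, sp m ℓ x.2 j) (dc sA m rA j) (dc sB m rB j))
    = (∑ y : (Fin ℓ → U) × (Fin ℓ → V), ∑ a, ∑ b, G y a b) ^ m := by
  calc
    (∑ x : (Fin (m*ℓ) → U) × (Fin (m*ℓ) → V), ∑ rA : Fin (sA^m), ∑ rB : Fin (sB^m),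
      ∏ j : Fin m, G (sp m ℓ x.1 j, sp m ℓ x.2 j) (dc sA m rA j) (dc sB m rB j))
      = ∑ x1 : Fin (m*ℓ) → U, ∑ x2 : Fin (m*ℓ) → V, ∑ rA : Fin (sA^m), ∑ rB : Fin (sB^m),
          ∏ j, G (sp m ℓ x1 j, sp m ℓ x2 j) (dc sA m rA j) (dc sB m rB j) :=
      Fintype.sum_prod_type _
    _ = ∑ a : Fin m → Fin ℓ → U, ∑ x2 : Fin (m*ℓ) → V, ∑ rA : Fin (sA^m), ∑ rB : Fin (sB^m),
          ∏ j, G (a j, sp m ℓ x2 j) (dc sA m rA j) (dc sB m rB j) :=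
      sum_split_s4 m ℓ (fun a => ∑ x2 : Fin (m*ℓ) → V, ∑ rA : Fin (sA^m), ∑ rB : Fin (sB^m),
          ∏ j, G (a j, sp m ℓ x2 j) (dc sA m rA j) (dc sB m rB j))
    _ = ∑ a : Fin m → Fin ℓ → U, ∑ b : Fin m → Fin ℓ → V, ∑ rA : Fin (sA^m), ∑ rB : Fin (sB^m),
          ∏ j, G (a j, b j) (dc sA m rA j) (dc sB m rB j) :=
      Finset.sum_congr rfl fun a _ => sum_split_s4 m ℓ (fun b => ∑ rA : Fin (sA^m), ∑ rB : Fin (sB^m),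
          ∏ j, G (a j, b j) (dc sA m rA j) (dc sB m rB j))
    _ = ∑ a : Fin m → Fin ℓ → U, ∑ b : Fin m → Fin ℓ → V, ∑ c : Fin m → Fin sA, ∑ rB : Fin (sB^m),
          ∏ j, G (a j, b j) (c j) (dc sB m rB j) :=
      Finset.sum_congr rfl fun a _ => Finset.sum_congr rfl fun b _ =>
        sum_dec (fun c => ∑ rB : Fin (sB^m), ∏ j, G (a j, b j) (c j) (dc sB m rB j))
    _ = ∑ a : Fin m → Fin ℓ → U, ∑ b : Fin m → Fin ℓ → V, ∑ c : Fin m → Fin sA,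
          ∑ d : Fin m → Fin sB, ∏ j, G (a j, b j) (c j) (d j) :=
      Finset.sum_congr rfl fun a _ => Finset.sum_congr rfl fun b _ =>
        Finset.sum_congr rfl fun c _ => sum_dec (fun d => ∏ j, G (a j, b j) (c j) (d j))
    _ = ∑ a : Fin m → Fin ℓ → U, ∑ b : Fin m → Fin ℓ → V, ∑ c : Fin m → Fin sA,
          ∏ j, ∑ d, G (a j, b j) (c j) d :=
      Finset.sum_congr rfl fun a _ => Finset.sum_congr rfl fun b _ =>
        Finset.sum_congr rfl fun c _ => sum_pi_prod (fun j d => G (a j, b j) (c j) d)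
    _ = ∑ a : Fin m → Fin ℓ → U, ∑ b : Fin m → Fin ℓ → V,
          ∏ j, ∑ c, ∑ d, G (a j, b j) c d :=
      Finset.sum_congr rfl fun a _ => Finset.sum_congr rfl fun b _ =>
        sum_pi_prod (fun j c => ∑ d, G (a j, b j) c d)
    _ = ∑ a : Fin m → Fin ℓ → U, ∏ j, ∑ b, ∑ c, ∑ d, G (a j, b) c d :=
      Finset.sum_congr rfl fun a _ => sum_pi_prod (fun j b => ∑ c, ∑ d, G (a j, b) c d)
    _ = ∏ j : Fin m, ∑ a, ∑ b, ∑ c, ∑ d, G (a, b) c d :=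
      sum_pi_prod (fun j a => ∑ b, ∑ c, ∑ d, G (a, b) c d)
    _ = (∑ a, ∑ b, ∑ c, ∑ d, G (a, b) c d) ^ m := by
      rw [Finset.prod_const, Finset.card_univ, Fintype.card_fin]
    _ = (∑ y : (Fin ℓ → U) × (Fin ℓ → V), ∑ a, ∑ b, G y a b) ^ m := by
      rw [Fintype.sum_prod_type]

lemma iid_sum {U V : Type*} [Fintype U] [Fintype V] (ρ : U × V → ℝ) (hρ : IsDist ρ) (ℓ : ℕ) :
    ∑ x : (Fin ℓ → U) × (Fin ℓ → V), iid ρ ℓ x = 1 := by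
  rw [← Equiv.sum_comp (Equiv.arrowProdEquivProdArrow (Fin ℓ) (fun _ => U) (fun _ => V)) (iid ρ ℓ)]
  have h1 : ∀ f : Fin ℓ → U × V, iid ρ ℓ ((Equiv.arrowProdEquivProdArrow (Fin ℓ) (fun _ => U) (fun _ => V)) f)
      = ∏ i, ρ (f i) := by
    intro f
    unfold iid
    simp [Equiv.arrowProdEquivProdArrow]
  simp only [h1]
  rw [sum_pi_prod (fun _ z => ρ z)]
  simp [hρ.2]

lemma colLE_amplify [Fintype U] [Fintype V]
    (ρ : U × V → ℝ) (hρ : IsDist ρ) (n : ℕ) (p : ℝ) (m k : ℕ)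
    (h : ColLE ρ n p k) : ColLE ρ n (1 - (1 - p) ^ m) (m * k) := by
  classical
  obtain ⟨ℓ, sA, sB, μA, μB, A, B, hμA, hμB, hsucc, hcA, hcB⟩ := h
  have hiid0 : ∀ (L : ℕ) (x : (Fin L → U) × (Fin L → V)), 0 ≤ iid ρ L x :=
    fun L x => Finset.prod_nonneg fun _ _ => hρ.1 _
  have split_iid : ∀ x : (Fin (m*ℓ) → U) × (Fin (m*ℓ) → V),
      iid ρ (m*ℓ) x = ∏ j : Fin m, iid ρ ℓ (sp m ℓ x.1 j, sp m ℓ x.2 j) := by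
    intro x
    show ∏ t, ρ (x.1 t, x.2 t)
      = ∏ j, ∏ i, ρ (x.1 (finProdFinEquiv (j, i)), x.2 (finProdFinEquiv (j, i)))
    rw [← Equiv.prod_comp finProdFinEquiv (fun t => ρ (x.1 t, x.2 t))]
    rw [Fintype.prod_prod_type]
  have wdec : ∀ (x : (Fin (m*ℓ) → U) × (Fin (m*ℓ) → V)) (rA : Fin (sA^m)) (rB : Fin (sB^m)),
      iid ρ (m*ℓ) x * ((∏ j, μA (dc sA m rA j)) * (∏ j, μB (dc sB m rB j)))
        = ∏ j, (iid ρ ℓ (sp m ℓ x.1 j, sp m ℓ x.2 j) * (μA (dc sA m rA j) * μB (dc sB m rB j))) := by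
    intro x rA rB
    rw [split_iid, ← Finset.prod_mul_distrib, ← Finset.prod_mul_distrib]
  have inner3 : ∀ (c : ℝ), (∑ a, ∑ b, c * (μA a * μB b)) = c := by
    intro c
    simp only [← Finset.mul_sum, ← Finset.sum_mul]
    rw [hμA.2, hμB.2]
    ring
  have stot : (∑ y : (Fin ℓ → U) × (Fin ℓ → V), ∑ a, ∑ b, iid ρ ℓ y * (μA a * μB b)) = 1 := by
    calc (∑ y : (Fin ℓ → U) × (Fin ℓ → V), ∑ a, ∑ b, iid ρ ℓ y * (μA a * μB b))
        = ∑ y : (Fin ℓ → U) × (Fin ℓ → V), iid ρ ℓ y :=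
        Finset.sum_congr rfl fun y _ => inner3 _
      _ = 1 := iid_sum ρ hρ ℓ
  refine ⟨m*ℓ, sA^m, sB^m,
    (fun r => ∏ j, μA (dc sA m r j)), (fun r => ∏ j, μB (dc sB m r j)),
    (fun x r => Finset.univ.biUnion fun j => A (sp m ℓ x j) (dc sA m r j)),
    (fun x r => Finset.univ.biUnion fun j => B (sp m ℓ x j) (dc sB m r j)),
    ⟨fun r => Finset.prod_nonneg fun _ _ => hμA.1 _, ?_⟩,
    ⟨fun r => Finset.prod_nonneg fun _ _ => hμB.1 _, ?_⟩,
    ?_, ?_, ?_⟩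
  · rw [sum_dec (fun c => ∏ j, μA (c j)), sum_pi_prod (fun _ z => μA z)]
    simp [hμA.2]
  · rw [sum_dec (fun c => ∏ j, μB (c j)), sum_pi_prod (fun _ z => μB z)]
    simp [hμB.2]
  · -- success probability
    intro i
    set q := ∑ x : (Fin ℓ → U) × (Fin ℓ → V), ∑ rA, ∑ rB,
        iid ρ ℓ x * (μA rA * μB rB) *
          (if i ∈ A x.1 rA ∧ i ∈ B x.2 rB then (1:ℝ) else 0) with hqdef
    have hpq : p ≤ q := hsucc i
    have hq1 : q ≤ 1 := by
      rw [hqdef]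
      conv_rhs => rw [← stot]
      refine Finset.sum_le_sum fun y _ => Finset.sum_le_sum fun a _ =>
        Finset.sum_le_sum fun b _ => ?_
      have h0 : 0 ≤ iid ρ ℓ y * (μA a * μB b) :=
        mul_nonneg (hiid0 _ _) (mul_nonneg (hμA.1 a) (hμB.1 b))
      split_ifs with hc
      · exact le_of_eq (mul_one _)
      · rw [mul_zero]; exact h0
    have btot : (∑ x : (Fin (m*ℓ) → U) × (Fin (m*ℓ) → V), ∑ rA : Fin (sA^m), ∑ rB : Fin (sB^m),
        iid ρ (m*ℓ) x * ((∏ j, μA (dc sA m rA j)) * (∏ j, μB (dc sB m rB j)))) = 1 := by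
      calc (∑ x : (Fin (m*ℓ) → U) × (Fin (m*ℓ) → V), ∑ rA : Fin (sA^m), ∑ rB : Fin (sB^m),
          iid ρ (m*ℓ) x * ((∏ j, μA (dc sA m rA j)) * (∏ j, μB (dc sB m rB j))))
          = ∑ x : (Fin (m*ℓ) → U) × (Fin (m*ℓ) → V), ∑ rA : Fin (sA^m), ∑ rB : Fin (sB^m),
            ∏ j, (iid ρ ℓ (sp m ℓ x.1 j, sp m ℓ x.2 j) * (μA (dc sA m rA j) * μB (dc sB m rB j))) :=
          Finset.sum_congr rfl fun x _ => Finset.sum_congr rfl fun rA _ =>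
            Finset.sum_congr rfl fun rB _ => wdec x rA rB
        _ = (∑ y : (Fin ℓ → U) × (Fin ℓ → V), ∑ a, ∑ b, iid ρ ℓ y * (μA a * μB b)) ^ m :=
          master_sum (fun y a b => iid ρ ℓ y * (μA a * μB b))
        _ = 1 := by rw [stot, one_pow]
    have bT : (∑ x : (Fin (m*ℓ) → U) × (Fin (m*ℓ) → V), ∑ rA : Fin (sA^m), ∑ rB : Fin (sB^m),
        iid ρ (m*ℓ) x * ((∏ j, μA (dc sA m rA j)) * (∏ j, μB (dc sB m rB j))) *
          ∏ j, (1 - (if i ∈ A (sp m ℓ x.1 j) (dc sA m rA j) ∧ i ∈ B (sp m ℓ x.2 j) (dc sB m rB j)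
            then (1:ℝ) else 0)))
        = (1 - q) ^ m := by
      calc (∑ x : (Fin (m*ℓ) → U) × (Fin (m*ℓ) → V), ∑ rA : Fin (sA^m), ∑ rB : Fin (sB^m),
          iid ρ (m*ℓ) x * ((∏ j, μA (dc sA m rA j)) * (∏ j, μB (dc sB m rB j))) *
            ∏ j, (1 - (if i ∈ A (sp m ℓ x.1 j) (dc sA m rA j) ∧ i ∈ B (sp m ℓ x.2 j) (dc sB m rB j)
              then (1:ℝ) else 0)))
          = ∑ x : (Fin (m*ℓ) → U) × (Fin (m*ℓ) → V), ∑ rA : Fin (sA^m), ∑ rB : Fin (sB^m),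
            ∏ j, (iid ρ ℓ (sp m ℓ x.1 j, sp m ℓ x.2 j) * (μA (dc sA m rA j) * μB (dc sB m rB j)) *
              (1 - (if i ∈ A (sp m ℓ x.1 j) (dc sA m rA j) ∧ i ∈ B (sp m ℓ x.2 j) (dc sB m rB j)
                then (1:ℝ) else 0))) := by
            refine Finset.sum_congr rfl fun x _ => Finset.sum_congr rfl fun rA _ =>
              Finset.sum_congr rfl fun rB _ => ?_
            rw [wdec, ← Finset.prod_mul_distrib]
        _ = (∑ y : (Fin ℓ → U) × (Fin ℓ → V), ∑ a, ∑ b, iid ρ ℓ y * (μA a * μB b) *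
              (1 - (if i ∈ A y.1 a ∧ i ∈ B y.2 b then (1:ℝ) else 0))) ^ m :=
          master_sum (fun y a b => iid ρ ℓ y * (μA a * μB b) *
            (1 - (if i ∈ A y.1 a ∧ i ∈ B y.2 b then (1:ℝ) else 0)))
        _ = (1 - q) ^ m := by
          congr 1
          simp only [mul_sub, mul_one, Finset.sum_sub_distrib]
          rw [stot, hqdef]
    have hqm : (1 - q)^m ≤ (1 - p)^m := pow_le_pow_left₀ (by linarith) (by linarith) m
    calc 1 - (1-p)^m ≤ 1 - (1-q)^m := by linarith
      _ = ∑ x : (Fin (m*ℓ) → U) × (Fin (m*ℓ) → V), ∑ rA : Fin (sA^m), ∑ rB : Fin (sB^m),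
            (iid ρ (m*ℓ) x * ((∏ j, μA (dc sA m rA j)) * (∏ j, μB (dc sB m rB j))) -
             iid ρ (m*ℓ) x * ((∏ j, μA (dc sA m rA j)) * (∏ j, μB (dc sB m rB j))) *
              ∏ j, (1 - (if i ∈ A (sp m ℓ x.1 j) (dc sA m rA j) ∧ i ∈ B (sp m ℓ x.2 j) (dc sB m rB j)
                then (1:ℝ) else 0))) := by
          simp only [Finset.sum_sub_distrib]
          rw [btot, bT]
      _ ≤ ∑ x : (Fin (m*ℓ) → U) × (Fin (m*ℓ) → V), ∑ rA : Fin (sA^m), ∑ rB : Fin (sB^m),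
            iid ρ (m*ℓ) x * ((∏ j, μA (dc sA m rA j)) * (∏ j, μB (dc sB m rB j))) *
              (if i ∈ Finset.univ.biUnion (fun j => A (sp m ℓ x.1 j) (dc sA m rA j)) ∧
                  i ∈ Finset.univ.biUnion (fun j => B (sp m ℓ x.2 j) (dc sB m rB j))
                then (1:ℝ) else 0) := by
          refine Finset.sum_le_sum fun x _ => Finset.sum_le_sum fun rA _ =>
            Finset.sum_le_sum fun rB _ => ?_
          have hW : 0 ≤ iid ρ (m*ℓ) x * ((∏ j, μA (dc sA m rA j)) * (∏ j, μB (dc sB m rB j))) :=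
            mul_nonneg (hiid0 _ _) (mul_nonneg (Finset.prod_nonneg fun _ _ => hμA.1 _)
              (Finset.prod_nonneg fun _ _ => hμB.1 _))
          by_cases hex : ∃ j, i ∈ A (sp m ℓ x.1 j) (dc sA m rA j) ∧ i ∈ B (sp m ℓ x.2 j) (dc sB m rB j)
          · obtain ⟨j0, h1, h2⟩ := hex
            have hz : (∏ j, (1 - (if i ∈ A (sp m ℓ x.1 j) (dc sA m rA j) ∧
                i ∈ B (sp m ℓ x.2 j) (dc sB m rB j) then (1:ℝ) else 0))) = 0 :=
              Finset.prod_eq_zero (Finset.mem_univ j0) (by simp [h1, h2])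
            have hind : (if i ∈ Finset.univ.biUnion (fun j => A (sp m ℓ x.1 j) (dc sA m rA j)) ∧
                i ∈ Finset.univ.biUnion (fun j => B (sp m ℓ x.2 j) (dc sB m rB j))
                then (1:ℝ) else 0) = 1 := by
              rw [if_pos]
              exact ⟨Finset.mem_biUnion.2 ⟨j0, Finset.mem_univ _, h1⟩,
                Finset.mem_biUnion.2 ⟨j0, Finset.mem_univ _, h2⟩⟩
            rw [hz, hind, mul_zero, sub_zero, mul_one]
          · push_neg at hex
            have hone : (∏ j, (1 - (if i ∈ A (sp m ℓ x.1 j) (dc sA m rA j) ∧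
                i ∈ B (sp m ℓ x.2 j) (dc sB m rB j) then (1:ℝ) else 0))) = 1 :=
              Finset.prod_eq_one fun j _ => by
                rw [if_neg, sub_zero]
                exact fun hc => (hex j hc.1) hc.2
            rw [hone, mul_one, sub_self]
            have : (0:ℝ) ≤ (if i ∈ Finset.univ.biUnion (fun j => A (sp m ℓ x.1 j) (dc sA m rA j)) ∧
                i ∈ Finset.univ.biUnion (fun j => B (sp m ℓ x.2 j) (dc sB m rB j))
                then (1:ℝ) else 0) := by positivity
            exact mul_nonneg hW this
  · -- card A
    intro x rA hx hr0
    have hr : 0 < ∏ j, μA (dc sA m rA j) := hr0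
    show (Finset.univ.biUnion fun j => A (sp m ℓ x.1 j) (dc sA m rA j)).card ≤ m * k
    have hposiid : ∀ j, 0 < iid ρ ℓ (sp m ℓ x.1 j, sp m ℓ x.2 j) := by
      intro j
      rcases (hiid0 ℓ (sp m ℓ x.1 j, sp m ℓ x.2 j)).lt_or_eq with hlt | heq
      · exact hlt
      · exfalso
        rw [split_iid, Finset.prod_eq_zero (Finset.mem_univ j) heq.symm] at hx
        exact lt_irrefl _ hx
    have hposμ : ∀ j, 0 < μA (dc sA m rA j) := by
      intro j
      rcases (hμA.1 (dc sA m rA j)).lt_or_eq with hlt | heq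
      · exact hlt
      · exfalso
        rw [Finset.prod_eq_zero (Finset.mem_univ j) heq.symm] at hr
        exact lt_irrefl _ hr
    refine Finset.card_biUnion_le.trans ?_
    calc ∑ j, (A (sp m ℓ x.1 j) (dc sA m rA j)).card ≤ ∑ _j : Fin m, k :=
        Finset.sum_le_sum fun j _ =>
          hcA (sp m ℓ x.1 j, sp m ℓ x.2 j) (dc sA m rA j) (hposiid j) (hposμ j)
      _ = m * k := by simp [Finset.sum_const, Finset.card_univ, mul_comm]
  · -- card B
    intro x rB hx hr0
    have hr : 0 < ∏ j, μB (dc sB m rB j) := hr0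
    show (Finset.univ.biUnion fun j => B (sp m ℓ x.2 j) (dc sB m rB j)).card ≤ m * k
    have hposiid : ∀ j, 0 < iid ρ ℓ (sp m ℓ x.1 j, sp m ℓ x.2 j) := by
      intro j
      rcases (hiid0 ℓ (sp m ℓ x.1 j, sp m ℓ x.2 j)).lt_or_eq with hlt | heq
      · exact hlt
      · exfalso
        rw [split_iid, Finset.prod_eq_zero (Finset.mem_univ j) heq.symm] at hx
        exact lt_irrefl _ hx
    have hposμ : ∀ j, 0 < μB (dc sB m rB j) := by
      intro j
      rcases (hμB.1 (dc sB m rB j)).lt_or_eq with hlt | heq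
      · exact hlt
      · exfalso
        rw [Finset.prod_eq_zero (Finset.mem_univ j) heq.symm] at hr
        exact lt_irrefl _ hr
    refine Finset.card_biUnion_le.trans ?_
    calc ∑ j, (B (sp m ℓ x.2 j) (dc sB m rB j)).card ≤ ∑ _j : Fin m, k :=
        Finset.sum_le_sum fun j _ =>
          hcB (sp m ℓ x.1 j, sp m ℓ x.2 j) (dc sB m rB j) (hposiid j) (hposμ j)
      _ = m * k := by simp [Finset.sum_const, Finset.card_univ, mul_comm]

theorem stmt4 {U V : Type} [Fintype U] [Fintype V] [Nonempty U] [Nonempty V]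
    (ρ : U × V → ℝ) (hρ : IsDist ρ) (n : ℕ) (hn : 1 ≤ n)
    (p : ℝ) (hp0 : 0 ≤ p) (hp1 : p ≤ 1) (m : ℕ) (hm : 1 ≤ m) :
    col ρ n (1 - (1 - p) ^ m) ≤ (m : ℕ∞) * col ρ n p := by
  by_cases hne : {k : ℕ∞ | ∃ m' : ℕ, k = (m' : ℕ∞) ∧ ColLE ρ n p m'}.Nonempty
  · have hmem : col ρ n p ∈ {k : ℕ∞ | ∃ m' : ℕ, k = (m' : ℕ∞) ∧ ColLE ρ n p m'} :=
      csInf_mem hne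
    obtain ⟨k, hk, hcol⟩ := hmem
    have hamp := colLE_amplify ρ hρ n p m k hcol
    have hle : col ρ n (1 - (1 - p) ^ m) ≤ ((m * k : ℕ) : ℕ∞) :=
      sInf_le ⟨m * k, rfl, hamp⟩
    calc col ρ n (1 - (1 - p) ^ m) ≤ ((m * k : ℕ) : ℕ∞) := hle
      _ = (m : ℕ∞) * (k : ℕ∞) := Nat.cast_mul m k
      _ = (m : ℕ∞) * col ρ n p := by rw [hk]
  · have htop : col ρ n p = ⊤ := by
      rw [col, Set.not_nonempty_iff_eq_empty.mp hne, sInf_empty]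
    rw [htop]
    have hmt : (m : ℕ∞) * ⊤ = ⊤ := by
      refine WithTop.mul_top ?_
      have : m ≠ 0 := by omega
      exact Nat.cast_ne_zero.mpr this
    rw [hmt]
    exact le_top

end SR
end

section
/- Let ρ be a bipartite distribution on U × V, let n ≥ 1, and let 0 < p < 1/2. Then col_ρ(n, p/2) ≤ 3n · agr_ρ(p) + 16. -/
open scoped BigOperators ENNReal

namespace SR

variable {U V X Y : Type*}

/-! ### Auxiliary lemmas -/

section Aux1

lemma iid_nonneg {ρ : U × V → ℝ} (h : ∀ a, 0 ≤ ρ a) (ℓ : ℕ)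
    (x : (Fin ℓ → U) × (Fin ℓ → V)) : 0 ≤ iid ρ ℓ x :=
  Finset.prod_nonneg fun _ _ => h _

variable [Fintype U] [Fintype V]

lemma sum_iid {ρ : U × V → ℝ} (h : IsDist ρ) (ℓ : ℕ) :
    ∑ x : (Fin ℓ → U) × (Fin ℓ → V), iid ρ ℓ x = 1 := by
  rw [Fintype.sum_prod_type]
  have h2 : ∀ u : Fin ℓ → U, ∑ v : Fin ℓ → V, iid ρ ℓ (u, v)
      = ∏ i, ∑ y : V, ρ (u i, y) := by
    intro u
    rw [Fintype.prod_sum (fun i y => ρ (u i, y))]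
    rfl
  simp only [h2]
  rw [← Fintype.prod_sum (fun (i : Fin ℓ) (x : U) => ∑ y : V, ρ (x, y))]
  have h1 : ∑ x : U, ∑ y : V, ρ (x, y) = 1 := by
    rw [← Fintype.sum_prod_type]; exact h.2
  simp [h1]

end Aux1

section Aux2

lemma sum4 {n : ℕ} {A B C D : Type*} [Fintype A] [Fintype B] [Fintype C] [Fintype D]
    (H : Fin n → A → B → C → D → ℝ) :
    ∑ a : Fin n → A, ∑ b : Fin n → B, ∑ c : Fin n → C, ∑ d : Fin n → D,
      ∏ i, H i (a i) (b i) (c i) (d i)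
    = ∏ i, ∑ a : A, ∑ b : B, ∑ c : C, ∑ d : D, H i a b c d := by
  calc
    _ = ∑ a : Fin n → A, ∑ b : Fin n → B, ∑ c : Fin n → C, ∏ i, ∑ d : D,
          H i (a i) (b i) (c i) d := by
        refine Finset.sum_congr rfl fun a _ => Finset.sum_congr rfl fun b _ =>
          Finset.sum_congr rfl fun c _ => ?_
        exact (Fintype.prod_sum fun i d => H i (a i) (b i) (c i) d).symm
    _ = ∑ a : Fin n → A, ∑ b : Fin n → B, ∏ i, ∑ c : C, ∑ d : D,
          H i (a i) (b i) c d := by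
        refine Finset.sum_congr rfl fun a _ => Finset.sum_congr rfl fun b _ => ?_
        exact (Fintype.prod_sum fun i c => ∑ d, H i (a i) (b i) c d).symm
    _ = ∑ a : Fin n → A, ∏ i, ∑ b : B, ∑ c : C, ∑ d : D, H i (a i) b c d := by
        refine Finset.sum_congr rfl fun a _ => ?_
        exact (Fintype.prod_sum fun i b => ∑ c, ∑ d, H i (a i) b c d).symm
    _ = _ := (Fintype.prod_sum fun i a => ∑ b, ∑ c, ∑ d, H i a b c d).symm

lemma prod_eq_two {N : ℕ} (i j : Fin N) (hij : i ≠ j) (F : Fin N → ℝ)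
    (h1 : ∀ k, k ≠ i → k ≠ j → F k = 1) : ∏ k, F k = F i * F j := by
  have hsub : ({i, j} : Finset (Fin N)) ⊆ Finset.univ := Finset.subset_univ _
  have h2 : ∏ k ∈ ({i, j} : Finset (Fin N)), F k = ∏ k, F k := by
    apply Finset.prod_subset hsub
    intro k _ hk
    simp only [Finset.mem_insert, Finset.mem_singleton] at hk
    push_neg at hk
    exact h1 k hk.1 hk.2
  rw [← h2]
  exact Finset.prod_pair hij

lemma prod_eq_one_aux {N : ℕ} (i : Fin N) (F : Fin N → ℝ)
    (h1 : ∀ k, k ≠ i → F k = 1) : ∏ k, F k = F i := by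
  have hsub : ({i} : Finset (Fin N)) ⊆ Finset.univ := Finset.subset_univ _
  have h2 : ∏ k ∈ ({i} : Finset (Fin N)), F k = ∏ k, F k := by
    apply Finset.prod_subset hsub
    intro k _ hk
    simp only [Finset.mem_singleton] at hk
    exact h1 k hk
  rw [← h2]
  simp

lemma count_lt {M t : ℕ} (h : t ≤ M) :
    ∑ a : Fin M, (if (a : ℕ) < t then (1:ℝ) else 0) = t := by
  classical
  rw [Fin.sum_univ_eq_sum_range (fun k => if k < t then (1:ℝ) else 0)]
  rw [Finset.sum_ite, Finset.sum_const_zero, add_zero, Finset.sum_const, nsmul_eq_mul, mul_one]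
  congr 1
  rw [show Finset.filter (fun k => k < t) (Finset.range M) = Finset.range t from by
    ext k; simp only [Finset.mem_filter, Finset.mem_range]; omega, Finset.card_range]

lemma sum_fin_scale {M : ℕ} (c q : ℝ) (A B : Fin M → ℝ) :
    ∑ a : Fin M, ∑ b : Fin M, c * (q * (q * (A a * B b)))
    = c * ((q * ∑ a, A a) * (q * ∑ b, B b)) := by
  calc
    _ = ∑ a : Fin M, (c * q * q * A a) * (∑ b, B b) := by
        refine Finset.sum_congr rfl fun a _ => ?_
        rw [Finset.mul_sum]
        refine Finset.sum_congr rfl fun b _ => by ring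
    _ = (∑ a : Fin M, c * q * q * A a) * (∑ b, B b) := (Finset.sum_mul _ _ _).symm
    _ = (c * q * q) * (∑ a, A a) * (∑ b, B b) := by rw [← Finset.mul_sum]
    _ = _ := by ring

end Aux2

section Aux3

variable (n ℓ : ℕ)

/-- block `i` of a tuple of `n*ℓ` samples -/
def blk (i : Fin n) (u : Fin (n * ℓ) → U) : Fin ℓ → U :=
  fun j => u (finProdFinEquiv (i, j))

/-- equivalence between `n` blocks of `ℓ` samples and `n*ℓ` samples -/
def pe : (Fin n → Fin ℓ → U) ≃ (Fin (n * ℓ) → U) :=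
  (Equiv.curry _ _ _).symm.trans (Equiv.arrowCongr finProdFinEquiv (Equiv.refl U))

lemma blk_pe (a : Fin n → Fin ℓ → U) (i : Fin n) : blk n ℓ i (pe n ℓ a) = a i := by
  funext j
  simp [blk, pe, Equiv.curry, Function.curry]

variable [Fintype U] [Fintype V]

omit [Fintype U] [Fintype V] in
lemma iid_blk (ρ : U × V → ℝ) (x : (Fin (n * ℓ) → U) × (Fin (n * ℓ) → V)) :
    iid ρ (n * ℓ) x = ∏ i, iid ρ ℓ (blk n ℓ i x.1, blk n ℓ i x.2) := by
  rw [show iid ρ (n*ℓ) x = ∏ k, ρ (x.1 k, x.2 k) from rfl,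
    ← Fintype.prod_equiv (finProdFinEquiv : Fin n × Fin ℓ ≃ Fin (n*ℓ))
      (fun p => ρ (x.1 (finProdFinEquiv p), x.2 (finProdFinEquiv p)))
      (fun k => ρ (x.1 k, x.2 k)) (fun p => rfl),
    Fintype.prod_prod_type]
  rfl

lemma factor (ρ : U × V → ℝ) (M : ℕ)
    (G : Fin n → ((Fin ℓ → U) × (Fin ℓ → V)) → Fin M → Fin M → ℝ) :
    ∑ x : (Fin (n*ℓ) → U) × (Fin (n*ℓ) → V), ∑ rA : Fin n → Fin M, ∑ rB : Fin n → Fin M,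
      iid ρ (n*ℓ) x * ∏ i, G i (blk n ℓ i x.1, blk n ℓ i x.2) (rA i) (rB i)
    = ∏ i, ∑ y : (Fin ℓ → U) × (Fin ℓ → V), ∑ a : Fin M, ∑ b : Fin M,
        iid ρ ℓ y * G i y a b := by
  rw [Fintype.sum_prod_type]
  rw [← Fintype.sum_equiv (pe n ℓ : (Fin n → Fin ℓ → U) ≃ _)
    (fun a => ∑ v : Fin (n*ℓ) → V, ∑ rA : Fin n → Fin M, ∑ rB : Fin n → Fin M,
      iid ρ (n*ℓ) (pe n ℓ a, v) * ∏ i, G i (blk n ℓ i (pe n ℓ a), blk n ℓ i v) (rA i) (rB i))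
    _ (fun a => rfl)]
  have h1 : ∀ a : Fin n → Fin ℓ → U,
      (∑ v : Fin (n*ℓ) → V, ∑ rA : Fin n → Fin M, ∑ rB : Fin n → Fin M,
        iid ρ (n*ℓ) (pe n ℓ a, v) * ∏ i, G i (blk n ℓ i (pe n ℓ a), blk n ℓ i v) (rA i) (rB i))
      = ∑ b : Fin n → Fin ℓ → V, ∑ rA : Fin n → Fin M, ∑ rB : Fin n → Fin M,
        ∏ i, (iid ρ ℓ (a i, b i) * G i (a i, b i) (rA i) (rB i)) := by
    intro a
    rw [← Fintype.sum_equiv (pe n ℓ : (Fin n → Fin ℓ → V) ≃ _)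
      (fun b => ∑ rA : Fin n → Fin M, ∑ rB : Fin n → Fin M,
        iid ρ (n*ℓ) (pe n ℓ a, pe n ℓ b) *
          ∏ i, G i (blk n ℓ i (pe n ℓ a), blk n ℓ i (pe n ℓ b)) (rA i) (rB i))
      _ (fun b => rfl)]
    refine Finset.sum_congr rfl fun b _ => Finset.sum_congr rfl fun rA _ =>
      Finset.sum_congr rfl fun rB _ => ?_
    rw [iid_blk]
    simp only [blk_pe]
    rw [← Finset.prod_mul_distrib]
  simp only [h1]
  rw [sum4 (fun i y1 y2 c d => iid ρ ℓ (y1, y2) * G i (y1, y2) c d)]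
  refine Finset.prod_congr rfl fun i _ => ?_
  rw [Fintype.sum_prod_type]

end Aux3

section Aux4

variable [Fintype U] [Fintype V]
variable (ρ : U × V → ℝ) (n ℓ : ℕ)

/-- per-block success probability -/
noncomputable def gam (tA : (Fin ℓ → U) → ℕ) (tB : (Fin ℓ → V) → ℕ) : ℝ :=
  ∑ y : (Fin ℓ → U) × (Fin ℓ → V),
    iid ρ ℓ y * (((n:ℝ)⁻¹ * tA y.1) * ((n:ℝ)⁻¹ * tB y.2))

/-- per-block marginal coin probability, A side -/
noncomputable def alf (tA : (Fin ℓ → U) → ℕ) : ℝ :=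
  ∑ y : (Fin ℓ → U) × (Fin ℓ → V), iid ρ ℓ y * ((n:ℝ)⁻¹ * tA y.1)

/-- per-block marginal coin probability, B side -/
noncomputable def bet (tB : (Fin ℓ → V) → ℕ) : ℝ :=
  ∑ y : (Fin ℓ → U) × (Fin ℓ → V), iid ρ ℓ y * ((n:ℝ)⁻¹ * tB y.2)

variable {ρ n}

lemma EB0 (hρ : IsDist ρ) (hn : 1 ≤ n) :
    ∑ y : (Fin ℓ → U) × (Fin ℓ → V), ∑ a : Fin n, ∑ b : Fin n,
      iid ρ ℓ y * ((n:ℝ)⁻¹ * ((n:ℝ)⁻¹ * 1)) = 1 := by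
  have hn0 : ((n:ℝ)) ≠ 0 := by
    have : (0:ℝ) < n := by exact_mod_cast Nat.lt_of_lt_of_le Nat.zero_lt_one hn
    exact ne_of_gt this
  have h : ∀ y : (Fin ℓ → U) × (Fin ℓ → V), ∑ a : Fin n, ∑ b : Fin n,
      iid ρ ℓ y * ((n:ℝ)⁻¹ * ((n:ℝ)⁻¹ * 1)) = iid ρ ℓ y := by
    intro y
    have := sum_fin_scale (M := n) (iid ρ ℓ y) ((n:ℝ)⁻¹)
      (fun _ => (1:ℝ)) (fun _ => (1:ℝ))
    simp only [mul_one] at this ⊢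
    rw [this]
    simp [Finset.sum_const, Finset.card_univ, inv_mul_cancel₀ hn0]
  rw [Finset.sum_congr rfl fun y _ => h y]
  exact sum_iid hρ ℓ

lemma EBcd (hn : 1 ≤ n) (tA : (Fin ℓ → U) → ℕ) (tB : (Fin ℓ → V) → ℕ)
    (hA : ∀ y, tA y ≤ n) (hB : ∀ y, tB y ≤ n) :
    ∑ y : (Fin ℓ → U) × (Fin ℓ → V), ∑ a : Fin n, ∑ b : Fin n,
      iid ρ ℓ y * ((n:ℝ)⁻¹ * ((n:ℝ)⁻¹ *
        ((if (a : ℕ) < tA y.1 then (1:ℝ) else 0) * (if (b : ℕ) < tB y.2 then (1:ℝ) else 0))))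
    = gam ρ n ℓ tA tB := by
  refine Finset.sum_congr rfl fun y _ => ?_
  rw [sum_fin_scale (M := n) (iid ρ ℓ y) ((n:ℝ)⁻¹)
    (fun a => if (a : ℕ) < tA y.1 then (1:ℝ) else 0)
    (fun b => if (b : ℕ) < tB y.2 then (1:ℝ) else 0),
    count_lt (hA y.1), count_lt (hB y.2)]

lemma EBA (hρ : IsDist ρ) (hn : 1 ≤ n) (tA : (Fin ℓ → U) → ℕ) (hA : ∀ y, tA y ≤ n) :
    ∑ y : (Fin ℓ → U) × (Fin ℓ → V), ∑ a : Fin n, ∑ b : Fin n,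
      iid ρ ℓ y * ((n:ℝ)⁻¹ * ((n:ℝ)⁻¹ * (if (a : ℕ) < tA y.1 then (1:ℝ) else 0)))
    = alf ρ n ℓ tA := by
  have hn0 : ((n:ℝ)) ≠ 0 := by
    have : (0:ℝ) < n := by exact_mod_cast Nat.lt_of_lt_of_le Nat.zero_lt_one hn
    exact ne_of_gt this
  refine Finset.sum_congr rfl fun y _ => ?_
  have h2 : ∀ a : Fin n, ∀ b : Fin n,
      iid ρ ℓ y * ((n:ℝ)⁻¹ * ((n:ℝ)⁻¹ * (if (a : ℕ) < tA y.1 then (1:ℝ) else 0)))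
      = iid ρ ℓ y * ((n:ℝ)⁻¹ * ((n:ℝ)⁻¹ *
          ((if (a : ℕ) < tA y.1 then (1:ℝ) else 0) * (fun _ : Fin n => (1:ℝ)) b))) := by
    intro a b; simp
  rw [Finset.sum_congr rfl fun a _ => Finset.sum_congr rfl fun b _ => h2 a b]
  rw [sum_fin_scale (M := n) (iid ρ ℓ y) ((n:ℝ)⁻¹)
    (fun a => if (a : ℕ) < tA y.1 then (1:ℝ) else 0) (fun _ => (1:ℝ)),
    count_lt (hA y.1)]
  simp [Finset.sum_const, Finset.card_univ, inv_mul_cancel₀ hn0]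

lemma EBB (hρ : IsDist ρ) (hn : 1 ≤ n) (tB : (Fin ℓ → V) → ℕ) (hB : ∀ y, tB y ≤ n) :
    ∑ y : (Fin ℓ → U) × (Fin ℓ → V), ∑ a : Fin n, ∑ b : Fin n,
      iid ρ ℓ y * ((n:ℝ)⁻¹ * ((n:ℝ)⁻¹ * (if (b : ℕ) < tB y.2 then (1:ℝ) else 0)))
    = bet ρ n ℓ tB := by
  have hn0 : ((n:ℝ)) ≠ 0 := by
    have : (0:ℝ) < n := by exact_mod_cast Nat.lt_of_lt_of_le Nat.zero_lt_one hn
    exact ne_of_gt this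
  refine Finset.sum_congr rfl fun y _ => ?_
  have h2 : ∀ a : Fin n, ∀ b : Fin n,
      iid ρ ℓ y * ((n:ℝ)⁻¹ * ((n:ℝ)⁻¹ * (if (b : ℕ) < tB y.2 then (1:ℝ) else 0)))
      = iid ρ ℓ y * ((n:ℝ)⁻¹ * ((n:ℝ)⁻¹ *
          ((fun _ : Fin n => (1:ℝ)) a * (if (b : ℕ) < tB y.2 then (1:ℝ) else 0)))) := by
    intro a b; simp
  rw [Finset.sum_congr rfl fun a _ => Finset.sum_congr rfl fun b _ => h2 a b]
  rw [sum_fin_scale (M := n) (iid ρ ℓ y) ((n:ℝ)⁻¹)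
    (fun _ => (1:ℝ)) (fun b => if (b : ℕ) < tB y.2 then (1:ℝ) else 0),
    count_lt (hB y.2)]
  simp [Finset.sum_const, Finset.card_univ, inv_mul_cancel₀ hn0]

end Aux4

section Aux5

variable [Fintype U] [Fintype V]
variable {ρ : U × V → ℝ} {n : ℕ} (ℓ : ℕ)

lemma qq_prod (hn : 1 ≤ n) :
    (((n:ℝ)^n)⁻¹ * ((n:ℝ)^n)⁻¹) = ∏ _k : Fin n, ((n:ℝ)⁻¹ * (n:ℝ)⁻¹) := by
  rw [Finset.prod_const, Finset.card_univ, Fintype.card_fin, mul_pow, inv_pow]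

lemma EF_cd (hρ : IsDist ρ) (hn : 1 ≤ n) (tA : (Fin ℓ → U) → ℕ) (tB : (Fin ℓ → V) → ℕ)
    (hA : ∀ y, tA y ≤ n) (hB : ∀ y, tB y ≤ n) (i : Fin n) :
    ∑ x : (Fin (n*ℓ) → U) × (Fin (n*ℓ) → V), ∑ rA : Fin n → Fin n, ∑ rB : Fin n → Fin n,
      iid ρ (n*ℓ) x * ((((n:ℝ)^n)⁻¹ * ((n:ℝ)^n)⁻¹) *
        ((if ((rA i : ℕ) < tA (blk n ℓ i x.1)) then (1:ℝ) else 0)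
          * (if ((rB i : ℕ) < tB (blk n ℓ i x.2)) then (1:ℝ) else 0)))
    = gam ρ n ℓ tA tB := by
  classical
  set G : Fin n → ((Fin ℓ → U) × (Fin ℓ → V)) → Fin n → Fin n → ℝ := fun k y a b =>
    (n:ℝ)⁻¹ * ((n:ℝ)⁻¹ * (if k = i then
      (if ((a:ℕ) < tA y.1) then (1:ℝ) else 0) * (if ((b:ℕ) < tB y.2) then (1:ℝ) else 0)
      else 1)) with hG
  have key : ∀ (x : (Fin (n*ℓ) → U) × (Fin (n*ℓ) → V)) (rA rB : Fin n → Fin n),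
      iid ρ (n*ℓ) x * ((((n:ℝ)^n)⁻¹ * ((n:ℝ)^n)⁻¹) *
        ((if ((rA i : ℕ) < tA (blk n ℓ i x.1)) then (1:ℝ) else 0)
          * (if ((rB i : ℕ) < tB (blk n ℓ i x.2)) then (1:ℝ) else 0)))
      = iid ρ (n*ℓ) x * ∏ k, G k (blk n ℓ k x.1, blk n ℓ k x.2) (rA k) (rB k) := by
    intro x rA rB
    congr 1
    have h2 : ∏ k, G k (blk n ℓ k x.1, blk n ℓ k x.2) (rA k) (rB k)
        = (∏ _k : Fin n, ((n:ℝ)⁻¹ * (n:ℝ)⁻¹)) * ∏ k, (if k = i then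
            (if ((rA k : ℕ) < tA (blk n ℓ k x.1)) then (1:ℝ) else 0)
              * (if ((rB k : ℕ) < tB (blk n ℓ k x.2)) then (1:ℝ) else 0) else 1) := by
      rw [← Finset.prod_mul_distrib]
      refine Finset.prod_congr rfl fun k _ => ?_
      simp only [hG]
      ring
    rw [h2, ← qq_prod hn]
    congr 1
    rw [prod_eq_one_aux i _ (fun k hk => by rw [if_neg hk]), if_pos rfl]
  rw [Finset.sum_congr rfl fun x _ => Finset.sum_congr rfl fun rA _ =>
    Finset.sum_congr rfl fun rB _ => key x rA rB]
  rw [factor n ℓ ρ n G]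
  have hval : ∀ k, (∑ y : (Fin ℓ → U) × (Fin ℓ → V), ∑ a : Fin n, ∑ b : Fin n,
      iid ρ ℓ y * G k y a b) = if k = i then gam ρ n ℓ tA tB else 1 := by
    intro k
    by_cases hk : k = i
    · subst hk
      rw [if_pos rfl, ← EBcd (ℓ := ℓ) hn tA tB hA hB]
      refine Finset.sum_congr rfl fun y _ => Finset.sum_congr rfl fun a _ =>
        Finset.sum_congr rfl fun b _ => ?_
      simp [hG]
    · rw [if_neg hk, ← EB0 (ℓ := ℓ) hρ hn]
      refine Finset.sum_congr rfl fun y _ => Finset.sum_congr rfl fun a _ =>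
        Finset.sum_congr rfl fun b _ => ?_
      simp [hG, hk]
  rw [Finset.prod_congr rfl fun k _ => hval k]
  rw [prod_eq_one_aux i _ (fun k hk => by rw [if_neg hk]), if_pos rfl]

lemma EF_A (hρ : IsDist ρ) (hn : 1 ≤ n) (tA : (Fin ℓ → U) → ℕ) (tB : (Fin ℓ → V) → ℕ)
    (hA : ∀ y, tA y ≤ n) (hB : ∀ y, tB y ≤ n) (i j : Fin n) (hij : j ≠ i) :
    ∑ x : (Fin (n*ℓ) → U) × (Fin (n*ℓ) → V), ∑ rA : Fin n → Fin n, ∑ rB : Fin n → Fin n,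
      iid ρ (n*ℓ) x * ((((n:ℝ)^n)⁻¹ * ((n:ℝ)^n)⁻¹) *
        ((if ((rA i : ℕ) < tA (blk n ℓ i x.1)) then (1:ℝ) else 0)
          * (if ((rB i : ℕ) < tB (blk n ℓ i x.2)) then (1:ℝ) else 0)
          * (if ((rA j : ℕ) < tA (blk n ℓ j x.1)) then (1:ℝ) else 0)))
    = gam ρ n ℓ tA tB * alf ρ n ℓ tA := by
  classical
  set G : Fin n → ((Fin ℓ → U) × (Fin ℓ → V)) → Fin n → Fin n → ℝ := fun k y a b =>
    (n:ℝ)⁻¹ * ((n:ℝ)⁻¹ * (if k = i then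
      (if ((a:ℕ) < tA y.1) then (1:ℝ) else 0) * (if ((b:ℕ) < tB y.2) then (1:ℝ) else 0)
      else if k = j then (if ((a:ℕ) < tA y.1) then (1:ℝ) else 0) else 1)) with hG
  have hijne : i ≠ j := fun h => hij h.symm
  have key : ∀ (x : (Fin (n*ℓ) → U) × (Fin (n*ℓ) → V)) (rA rB : Fin n → Fin n),
      iid ρ (n*ℓ) x * ((((n:ℝ)^n)⁻¹ * ((n:ℝ)^n)⁻¹) *
        ((if ((rA i : ℕ) < tA (blk n ℓ i x.1)) then (1:ℝ) else 0)
          * (if ((rB i : ℕ) < tB (blk n ℓ i x.2)) then (1:ℝ) else 0)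
          * (if ((rA j : ℕ) < tA (blk n ℓ j x.1)) then (1:ℝ) else 0)))
      = iid ρ (n*ℓ) x * ∏ k, G k (blk n ℓ k x.1, blk n ℓ k x.2) (rA k) (rB k) := by
    intro x rA rB
    congr 1
    have h2 : ∏ k, G k (blk n ℓ k x.1, blk n ℓ k x.2) (rA k) (rB k)
        = (∏ _k : Fin n, ((n:ℝ)⁻¹ * (n:ℝ)⁻¹)) * ∏ k, (if k = i then
            (if ((rA k : ℕ) < tA (blk n ℓ k x.1)) then (1:ℝ) else 0)
              * (if ((rB k : ℕ) < tB (blk n ℓ k x.2)) then (1:ℝ) else 0)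
          else if k = j then (if ((rA k : ℕ) < tA (blk n ℓ k x.1)) then (1:ℝ) else 0)
          else 1) := by
      rw [← Finset.prod_mul_distrib]
      refine Finset.prod_congr rfl fun k _ => ?_
      simp only [hG]
      ring
    rw [h2, ← qq_prod hn]
    congr 1
    rw [prod_eq_two i j hijne _ (fun k hki hkj => by rw [if_neg hki, if_neg hkj]),
      if_pos rfl, if_neg hij, if_pos rfl]
  rw [Finset.sum_congr rfl fun x _ => Finset.sum_congr rfl fun rA _ =>
    Finset.sum_congr rfl fun rB _ => key x rA rB]
  rw [factor n ℓ ρ n G]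
  have hval : ∀ k, (∑ y : (Fin ℓ → U) × (Fin ℓ → V), ∑ a : Fin n, ∑ b : Fin n,
      iid ρ ℓ y * G k y a b) = if k = i then gam ρ n ℓ tA tB
        else if k = j then alf ρ n ℓ tA else 1 := by
    intro k
    by_cases hk : k = i
    · subst hk
      rw [if_pos rfl, ← EBcd (ℓ := ℓ) hn tA tB hA hB]
      refine Finset.sum_congr rfl fun y _ => Finset.sum_congr rfl fun a _ =>
        Finset.sum_congr rfl fun b _ => ?_
      simp [hG]
    · by_cases hk2 : k = j
      · subst hk2
        rw [if_neg hk, if_pos rfl, ← EBA (ℓ := ℓ) hρ hn tA hA]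
        refine Finset.sum_congr rfl fun y _ => Finset.sum_congr rfl fun a _ =>
          Finset.sum_congr rfl fun b _ => ?_
        simp [hG, hk]
      · rw [if_neg hk, if_neg hk2, ← EB0 (ℓ := ℓ) hρ hn]
        refine Finset.sum_congr rfl fun y _ => Finset.sum_congr rfl fun a _ =>
          Finset.sum_congr rfl fun b _ => ?_
        simp [hG, hk, hk2]
  rw [Finset.prod_congr rfl fun k _ => hval k]
  rw [prod_eq_two i j hijne _ (fun k hki hkj => by rw [if_neg hki, if_neg hkj]),
    if_pos rfl, if_neg hij, if_pos rfl]

lemma EF_B (hρ : IsDist ρ) (hn : 1 ≤ n) (tA : (Fin ℓ → U) → ℕ) (tB : (Fin ℓ → V) → ℕ)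
    (hA : ∀ y, tA y ≤ n) (hB : ∀ y, tB y ≤ n) (i j : Fin n) (hij : j ≠ i) :
    ∑ x : (Fin (n*ℓ) → U) × (Fin (n*ℓ) → V), ∑ rA : Fin n → Fin n, ∑ rB : Fin n → Fin n,
      iid ρ (n*ℓ) x * ((((n:ℝ)^n)⁻¹ * ((n:ℝ)^n)⁻¹) *
        ((if ((rA i : ℕ) < tA (blk n ℓ i x.1)) then (1:ℝ) else 0)
          * (if ((rB i : ℕ) < tB (blk n ℓ i x.2)) then (1:ℝ) else 0)
          * (if ((rB j : ℕ) < tB (blk n ℓ j x.2)) then (1:ℝ) else 0)))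
    = gam ρ n ℓ tA tB * bet ρ n ℓ tB := by
  classical
  set G : Fin n → ((Fin ℓ → U) × (Fin ℓ → V)) → Fin n → Fin n → ℝ := fun k y a b =>
    (n:ℝ)⁻¹ * ((n:ℝ)⁻¹ * (if k = i then
      (if ((a:ℕ) < tA y.1) then (1:ℝ) else 0) * (if ((b:ℕ) < tB y.2) then (1:ℝ) else 0)
      else if k = j then (if ((b:ℕ) < tB y.2) then (1:ℝ) else 0) else 1)) with hG
  have hijne : i ≠ j := fun h => hij h.symm
  have key : ∀ (x : (Fin (n*ℓ) → U) × (Fin (n*ℓ) → V)) (rA rB : Fin n → Fin n),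
      iid ρ (n*ℓ) x * ((((n:ℝ)^n)⁻¹ * ((n:ℝ)^n)⁻¹) *
        ((if ((rA i : ℕ) < tA (blk n ℓ i x.1)) then (1:ℝ) else 0)
          * (if ((rB i : ℕ) < tB (blk n ℓ i x.2)) then (1:ℝ) else 0)
          * (if ((rB j : ℕ) < tB (blk n ℓ j x.2)) then (1:ℝ) else 0)))
      = iid ρ (n*ℓ) x * ∏ k, G k (blk n ℓ k x.1, blk n ℓ k x.2) (rA k) (rB k) := by
    intro x rA rB
    congr 1
    have h2 : ∏ k, G k (blk n ℓ k x.1, blk n ℓ k x.2) (rA k) (rB k)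
        = (∏ _k : Fin n, ((n:ℝ)⁻¹ * (n:ℝ)⁻¹)) * ∏ k, (if k = i then
            (if ((rA k : ℕ) < tA (blk n ℓ k x.1)) then (1:ℝ) else 0)
              * (if ((rB k : ℕ) < tB (blk n ℓ k x.2)) then (1:ℝ) else 0)
          else if k = j then (if ((rB k : ℕ) < tB (blk n ℓ k x.2)) then (1:ℝ) else 0)
          else 1) := by
      rw [← Finset.prod_mul_distrib]
      refine Finset.prod_congr rfl fun k _ => ?_
      simp only [hG]
      ring
    rw [h2, ← qq_prod hn]
    congr 1
    rw [prod_eq_two i j hijne _ (fun k hki hkj => by rw [if_neg hki, if_neg hkj]),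
      if_pos rfl, if_neg hij, if_pos rfl]
  rw [Finset.sum_congr rfl fun x _ => Finset.sum_congr rfl fun rA _ =>
    Finset.sum_congr rfl fun rB _ => key x rA rB]
  rw [factor n ℓ ρ n G]
  have hval : ∀ k, (∑ y : (Fin ℓ → U) × (Fin ℓ → V), ∑ a : Fin n, ∑ b : Fin n,
      iid ρ ℓ y * G k y a b) = if k = i then gam ρ n ℓ tA tB
        else if k = j then bet ρ n ℓ tB else 1 := by
    intro k
    by_cases hk : k = i
    · subst hk
      rw [if_pos rfl, ← EBcd (ℓ := ℓ) hn tA tB hA hB]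
      refine Finset.sum_congr rfl fun y _ => Finset.sum_congr rfl fun a _ =>
        Finset.sum_congr rfl fun b _ => ?_
      simp [hG]
    · by_cases hk2 : k = j
      · subst hk2
        rw [if_neg hk, if_pos rfl, ← EBB (ℓ := ℓ) hρ hn tB hB]
        refine Finset.sum_congr rfl fun y _ => Finset.sum_congr rfl fun a _ =>
          Finset.sum_congr rfl fun b _ => ?_
        simp [hG, hk]
      · rw [if_neg hk, if_neg hk2, ← EB0 (ℓ := ℓ) hρ hn]
        refine Finset.sum_congr rfl fun y _ => Finset.sum_congr rfl fun a _ =>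
          Finset.sum_congr rfl fun b _ => ?_
        simp [hG, hk, hk2]
  rw [Finset.prod_congr rfl fun k _ => hval k]
  rw [prod_eq_two i j hijne _ (fun k hki hkj => by rw [if_neg hki, if_neg hkj]),
    if_pos rfl, if_neg hij, if_pos rfl]

end Aux5

section Aux6

variable {W : Type*} (n ℓ : ℕ)

/-- untruncated output set -/
noncomputable def ASet (t : (Fin ℓ → W) → ℕ) (u : Fin (n*ℓ) → W) (r : Fin n → Fin n) :
    Finset (Fin n) :=
  Finset.univ.filter (fun i => (r i : ℕ) < t (blk n ℓ i u))

/-- truncated output set -/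
noncomputable def ATr (K : ℕ) (t : (Fin ℓ → W) → ℕ) (u : Fin (n*ℓ) → W)
    (r : Fin n → Fin n) : Finset (Fin n) :=
  if (ASet n ℓ t u r).card ≤ K then ASet n ℓ t u r else ∅

lemma card_ATr_le (K : ℕ) (t : (Fin ℓ → W) → ℕ) (u : Fin (n*ℓ) → W) (r : Fin n → Fin n) :
    (ATr n ℓ K t u r).card ≤ K := by
  unfold ATr
  split
  · assumption
  · simp

lemma mem_ATr {K : ℕ} {t : (Fin ℓ → W) → ℕ} {u : Fin (n*ℓ) → W} {r : Fin n → Fin n}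
    {i : Fin n} :
    i ∈ ATr n ℓ K t u r ↔ (((r i : ℕ) < t (blk n ℓ i u)) ∧ (ASet n ℓ t u r).card ≤ K) := by
  unfold ATr
  split
  · simp only [ASet, Finset.mem_filter, Finset.mem_univ, true_and]
    tauto
  · simp only [Finset.notMem_empty, false_iff]
    tauto

lemma card_ASet_cast (t : (Fin ℓ → W) → ℕ) (u : Fin (n*ℓ) → W) (r : Fin n → Fin n) :
    (((ASet n ℓ t u r).card : ℝ))
      = ∑ j, (if (r j : ℕ) < t (blk n ℓ j u) then (1:ℝ) else 0) := by
  unfold ASet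
  rw [Finset.card_filter]
  push_cast
  rfl

end Aux6

section Aux7

open Finset in
lemma pointwise_bound {N K : ℕ} (hK : 0 < K) (i : Fin N) (cA cB : Fin N → ℝ)
    (hcA : ∀ j, cA j = 0 ∨ cA j = 1) (hcB : ∀ j, cB j = 0 ∨ cB j = 1)
    (NA NB : ℕ) (hNA : (NA:ℝ) = ∑ j, cA j) (hNB : (NB:ℝ) = ∑ j, cB j)
    (IA IB : Prop) [Decidable IA] [Decidable IB]
    (hIA : IA ↔ (cA i = 1 ∧ NA ≤ K)) (hIB : IB ↔ (cB i = 1 ∧ NB ≤ K)) :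
    cA i * cB i - (∑ j ∈ Finset.univ.erase i, (K:ℝ)⁻¹ * (cA i * cB i * cA j))
      - (∑ j ∈ Finset.univ.erase i, (K:ℝ)⁻¹ * (cA i * cB i * cB j))
    ≤ (if IA ∧ IB then (1:ℝ) else 0) := by
  have hA0 : ∀ j, 0 ≤ cA j := fun j => by rcases hcA j with h | h <;> rw [h] <;> norm_num
  have hB0 : ∀ j, 0 ≤ cB j := fun j => by rcases hcB j with h | h <;> rw [h] <;> norm_num
  have hKR : (0:ℝ) < K := by exact_mod_cast hK
  have hite : (0:ℝ) ≤ (if IA ∧ IB then (1:ℝ) else 0) := by split <;> norm_num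
  have hterm : ∀ j, 0 ≤ (K:ℝ)⁻¹ * (cA i * cB i * cA j) := fun j =>
    mul_nonneg (by positivity) (mul_nonneg (mul_nonneg (hA0 i) (hB0 i)) (hA0 j))
  have hterm' : ∀ j, 0 ≤ (K:ℝ)⁻¹ * (cA i * cB i * cB j) := fun j =>
    mul_nonneg (by positivity) (mul_nonneg (mul_nonneg (hA0 i) (hB0 i)) (hB0 j))
  have hsA : 0 ≤ ∑ j ∈ univ.erase i, (K:ℝ)⁻¹ * (cA i * cB i * cA j) :=
    Finset.sum_nonneg fun j _ => hterm j
  have hsB : 0 ≤ ∑ j ∈ univ.erase i, (K:ℝ)⁻¹ * (cA i * cB i * cB j) :=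
    Finset.sum_nonneg fun j _ => hterm' j
  rcases hcA i with hA1 | hA1
  · simp only [hA1, zero_mul, mul_zero, Finset.sum_const_zero, sub_zero]
    exact hite
  rcases hcB i with hB1 | hB1
  · simp only [hB1, zero_mul, mul_zero, Finset.sum_const_zero, sub_zero]
    exact hite
  -- both indicators are 1
  have hsumA : (NA : ℝ) = 1 + ∑ j ∈ univ.erase i, cA j := by
    rw [hNA, ← Finset.add_sum_erase _ _ (Finset.mem_univ i), hA1]
  have hsumB : (NB : ℝ) = 1 + ∑ j ∈ univ.erase i, cB j := by
    rw [hNB, ← Finset.add_sum_erase _ _ (Finset.mem_univ i), hB1]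
  have hfacA : ∑ j ∈ univ.erase i, (K:ℝ)⁻¹ * (cA i * cB i * cA j)
      = (K:ℝ)⁻¹ * ∑ j ∈ univ.erase i, cA j := by
    rw [Finset.mul_sum]
    exact Finset.sum_congr rfl fun j _ => by rw [hA1, hB1]; ring
  have hfacB : ∑ j ∈ univ.erase i, (K:ℝ)⁻¹ * (cA i * cB i * cB j)
      = (K:ℝ)⁻¹ * ∑ j ∈ univ.erase i, cB j := by
    rw [Finset.mul_sum]
    exact Finset.sum_congr rfl fun j _ => by rw [hA1, hB1]; ring
  by_cases hA2 : NA ≤ K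
  · by_cases hB2 : NB ≤ K
    · rw [if_pos ⟨hIA.2 ⟨hA1, hA2⟩, hIB.2 ⟨hB1, hB2⟩⟩]
      have h11 : cA i * cB i = 1 := by rw [hA1, hB1, mul_one]
      linarith [hsA, hsB]
    · -- NB ≥ K+1 : the subtracted B-term is at least 1
      have h1 : (K:ℝ) + 1 ≤ NB := by exact_mod_cast Nat.succ_le_of_lt (Nat.lt_of_not_le hB2)
      have h2 : (K:ℝ) ≤ ∑ j ∈ univ.erase i, cB j := by linarith [hsumB]
      have h3 : (1:ℝ) ≤ (K:ℝ)⁻¹ * ∑ j ∈ univ.erase i, cB j := by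
        rw [← inv_mul_cancel₀ (ne_of_gt hKR)]
        exact mul_le_mul_of_nonneg_left h2 (by positivity)
      rw [hfacA, hfacB]
      have h11 : cA i * cB i = 1 := by rw [hA1, hB1, mul_one]
      have h4 : 0 ≤ (K:ℝ)⁻¹ * ∑ j ∈ univ.erase i, cA j := by rw [← hfacA]; exact hsA
      linarith
  · have h1 : (K:ℝ) + 1 ≤ NA := by exact_mod_cast Nat.succ_le_of_lt (Nat.lt_of_not_le hA2)
    have h2 : (K:ℝ) ≤ ∑ j ∈ univ.erase i, cA j := by linarith [hsumA]
    have h3 : (1:ℝ) ≤ (K:ℝ)⁻¹ * ∑ j ∈ univ.erase i, cA j := by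
      rw [← inv_mul_cancel₀ (ne_of_gt hKR)]
      exact mul_le_mul_of_nonneg_left h2 (by positivity)
    rw [hfacA, hfacB]
    have h11 : cA i * cB i = 1 := by rw [hA1, hB1, mul_one]
    have h4 : 0 ≤ (K:ℝ)⁻¹ * ∑ j ∈ univ.erase i, cB j := by rw [← hfacB]; exact hsB
    linarith

lemma nested_split {Z R1 R2 J : Type*} [Fintype Z] [Fintype R1] [Fintype R2]
    (s : Finset J) (w : Z → ℝ) (F : Z → R1 → R2 → ℝ) (GA GB : J → Z → R1 → R2 → ℝ) :
    ∑ x : Z, ∑ a : R1, ∑ b : R2,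
      w x * (F x a b - (∑ j ∈ s, GA j x a b) - (∑ j ∈ s, GB j x a b))
    = (∑ x : Z, ∑ a : R1, ∑ b : R2, w x * F x a b)
      - (∑ j ∈ s, ∑ x : Z, ∑ a : R1, ∑ b : R2, w x * GA j x a b)
      - (∑ j ∈ s, ∑ x : Z, ∑ a : R1, ∑ b : R2, w x * GB j x a b) := by
  have h1 : ∀ (H : J → Z → R1 → R2 → ℝ),
      ∑ x : Z, ∑ a : R1, ∑ b : R2, w x * (∑ j ∈ s, H j x a b)
      = ∑ j ∈ s, ∑ x : Z, ∑ a : R1, ∑ b : R2, w x * H j x a b := by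
    intro H
    calc
      _ = ∑ x : Z, ∑ a : R1, ∑ b : R2, ∑ j ∈ s, w x * H j x a b := by
          refine Finset.sum_congr rfl fun x _ => Finset.sum_congr rfl fun a _ =>
            Finset.sum_congr rfl fun b _ => Finset.mul_sum _ _ _
      _ = ∑ x : Z, ∑ a : R1, ∑ j ∈ s, ∑ b : R2, w x * H j x a b := by
          refine Finset.sum_congr rfl fun x _ => Finset.sum_congr rfl fun a _ => ?_
          exact Finset.sum_comm
      _ = ∑ x : Z, ∑ j ∈ s, ∑ a : R1, ∑ b : R2, w x * H j x a b := by
          refine Finset.sum_congr rfl fun x _ => ?_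
          exact Finset.sum_comm
      _ = _ := Finset.sum_comm
  simp only [mul_sub, Finset.sum_sub_distrib]
  rw [h1 GA, h1 GB]


lemma split_pointwise {J : Type*} (s : Finset J) (w u d : ℝ) (S1 S2 : J → ℝ) :
    w * (u * (d - (∑ j ∈ s, S1 j) - (∑ j ∈ s, S2 j)))
    = w * ((u * d) - (∑ j ∈ s, u * S1 j) - (∑ j ∈ s, u * S2 j)) := by
  have h1 : ∑ j ∈ s, u * S1 j = u * ∑ j ∈ s, S1 j := (Finset.mul_sum _ _ _).symm
  have h2 : ∑ j ∈ s, u * S2 j = u * ∑ j ∈ s, S2 j := (Finset.mul_sum _ _ _).symm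
  rw [h1, h2]; ring

lemma nested_cmul {Z R1 R2 : Type*} [Fintype Z] [Fintype R1] [Fintype R2]
    (c : ℝ) (H : Z → R1 → R2 → ℝ) :
    ∑ x : Z, ∑ a : R1, ∑ b : R2, c * H x a b
    = c * ∑ x : Z, ∑ a : R1, ∑ b : R2, H x a b := by
  simp_rw [← Finset.mul_sum]

lemma nested_mono {Z R1 R2 : Type*} [Fintype Z] [Fintype R1] [Fintype R2]
    (F G : Z → R1 → R2 → ℝ) (h : ∀ x a b, F x a b ≤ G x a b) :
    ∑ x : Z, ∑ a : R1, ∑ b : R2, F x a b ≤ ∑ x : Z, ∑ a : R1, ∑ b : R2, G x a b :=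
  Finset.sum_le_sum fun x _ => Finset.sum_le_sum fun a _ =>
    Finset.sum_le_sum fun b _ => h x a b

end Aux7

section Main

variable [Fintype U] [Fintype V]

set_option maxHeartbeats 1600000 in
lemma exists_protocol (ρ : U × V → ℝ) (hρ : IsDist ρ) {n : ℕ} (hn : 1 ≤ n)
    {p : ℝ} (hp0 : 0 < p) (ℓ : ℕ)
    (f : (Fin ℓ → U) → ℝ) (g : (Fin ℓ → V) → ℝ)
    (hf : ∀ x, f x ∈ Set.Icc (0:ℝ) 1) (hg : ∀ y, g y ∈ Set.Icc (0:ℝ) 1)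
    (hs : p ≤ ∑ x : (Fin ℓ → U) × (Fin ℓ → V), iid ρ ℓ x * (f x.1 * g x.2)) :
    ColLE ρ n (p/2)
      (⌈3 * (n:ℝ) * ((∑ x : (Fin ℓ → U) × (Fin ℓ → V), iid ρ ℓ x * f x.1)
        + (∑ x : (Fin ℓ → U) × (Fin ℓ → V), iid ρ ℓ x * g x.2))⌉₊ + 6) := by
  classical
  set c1 := ∑ x : (Fin ℓ → U) × (Fin ℓ → V), iid ρ ℓ x * f x.1 with hc1def
  set c2 := ∑ x : (Fin ℓ → U) × (Fin ℓ → V), iid ρ ℓ x * g x.2 with hc2def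
  set K := ⌈3 * (n:ℝ) * (c1 + c2)⌉₊ + 6 with hKdef
  have hρ0 := hρ.1
  have hn1 : (1:ℝ) ≤ (n:ℝ) := by exact_mod_cast hn
  have hn0 : (0:ℝ) < (n:ℝ) := by linarith
  set tA : (Fin ℓ → U) → ℕ := fun y => ⌈(n:ℝ) * f y⌉₊ with htAdef
  set tB : (Fin ℓ → V) → ℕ := fun y => ⌈(n:ℝ) * g y⌉₊ with htBdef
  have hA : ∀ y, tA y ≤ n := by
    intro y
    apply Nat.ceil_le.2
    have h1 := (hf y).2
    have h2 := (hf y).1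
    nlinarith
  have hB : ∀ y, tB y ≤ n := by
    intro y
    apply Nat.ceil_le.2
    have h1 := (hg y).2
    have h2 := (hg y).1
    nlinarith
  have hiidnn : ∀ x : (Fin ℓ → U) × (Fin ℓ → V), 0 ≤ iid ρ ℓ x := iid_nonneg hρ0 ℓ
  have hone := sum_iid hρ ℓ
  -- pointwise threshold bounds
  have htAl : ∀ y, f y ≤ (n:ℝ)⁻¹ * tA y := by
    intro y
    have h2 : (n:ℝ) * f y ≤ (⌈(n:ℝ) * f y⌉₊ : ℝ) := Nat.le_ceil _
    have h3 : (n:ℝ)⁻¹ * ((n:ℝ) * f y) ≤ (n:ℝ)⁻¹ * (tA y : ℝ) :=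
      mul_le_mul_of_nonneg_left h2 (by positivity)
    calc f y = (n:ℝ)⁻¹ * ((n:ℝ) * f y) := by field_simp
      _ ≤ _ := h3
  have htBl : ∀ y, g y ≤ (n:ℝ)⁻¹ * tB y := by
    intro y
    have h2 : (n:ℝ) * g y ≤ (⌈(n:ℝ) * g y⌉₊ : ℝ) := Nat.le_ceil _
    have h3 : (n:ℝ)⁻¹ * ((n:ℝ) * g y) ≤ (n:ℝ)⁻¹ * (tB y : ℝ) :=
      mul_le_mul_of_nonneg_left h2 (by positivity)
    calc g y = (n:ℝ)⁻¹ * ((n:ℝ) * g y) := by field_simp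
      _ ≤ _ := h3
  have htAu : ∀ y, (n:ℝ)⁻¹ * tA y ≤ f y + (n:ℝ)⁻¹ := by
    intro y
    have h2 : ((⌈(n:ℝ) * f y⌉₊ : ℝ)) < (n:ℝ) * f y + 1 :=
      Nat.ceil_lt_add_one (by nlinarith [(hf y).1])
    have h3 : (n:ℝ)⁻¹ * (tA y : ℝ) ≤ (n:ℝ)⁻¹ * ((n:ℝ) * f y + 1) :=
      mul_le_mul_of_nonneg_left (le_of_lt h2) (by positivity)
    calc (n:ℝ)⁻¹ * (tA y : ℝ) ≤ (n:ℝ)⁻¹ * ((n:ℝ) * f y + 1) := h3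
      _ = f y + (n:ℝ)⁻¹ := by field_simp
  have htBu : ∀ y, (n:ℝ)⁻¹ * tB y ≤ g y + (n:ℝ)⁻¹ := by
    intro y
    have h2 : ((⌈(n:ℝ) * g y⌉₊ : ℝ)) < (n:ℝ) * g y + 1 :=
      Nat.ceil_lt_add_one (by nlinarith [(hg y).1])
    have h3 : (n:ℝ)⁻¹ * (tB y : ℝ) ≤ (n:ℝ)⁻¹ * ((n:ℝ) * g y + 1) :=
      mul_le_mul_of_nonneg_left (le_of_lt h2) (by positivity)
    calc (n:ℝ)⁻¹ * (tB y : ℝ) ≤ (n:ℝ)⁻¹ * ((n:ℝ) * g y + 1) := h3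
      _ = g y + (n:ℝ)⁻¹ := by field_simp
  -- bounds on gam, alf, bet
  have hgam_ge : p ≤ gam ρ n ℓ tA tB := by
    refine le_trans hs (Finset.sum_le_sum fun y _ => ?_)
    refine mul_le_mul_of_nonneg_left ?_ (hiidnn y)
    exact mul_le_mul (htAl y.1) (htBl y.2) (hg y.2).1
      (le_trans (hf y.1).1 (htAl y.1))
  have half_le : alf ρ n ℓ tA ≤ c1 + (n:ℝ)⁻¹ := by
    unfold alf
    calc ∑ y : (Fin ℓ → U) × (Fin ℓ → V), iid ρ ℓ y * ((n:ℝ)⁻¹ * tA y.1)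
        ≤ ∑ y : (Fin ℓ → U) × (Fin ℓ → V), iid ρ ℓ y * (f y.1 + (n:ℝ)⁻¹) :=
          Finset.sum_le_sum fun y _ =>
            mul_le_mul_of_nonneg_left (htAu y.1) (hiidnn y)
      _ = c1 + (n:ℝ)⁻¹ := by
          rw [hc1def]
          simp only [mul_add, Finset.sum_add_distrib]
          rw [← Finset.sum_mul, hone, one_mul]
  have hbet_le : bet ρ n ℓ tB ≤ c2 + (n:ℝ)⁻¹ := by
    unfold bet
    calc ∑ y : (Fin ℓ → U) × (Fin ℓ → V), iid ρ ℓ y * ((n:ℝ)⁻¹ * tB y.2)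
        ≤ ∑ y : (Fin ℓ → U) × (Fin ℓ → V), iid ρ ℓ y * (g y.2 + (n:ℝ)⁻¹) :=
          Finset.sum_le_sum fun y _ =>
            mul_le_mul_of_nonneg_left (htBu y.2) (hiidnn y)
      _ = c2 + (n:ℝ)⁻¹ := by
          rw [hc2def]
          simp only [mul_add, Finset.sum_add_distrib]
          rw [← Finset.sum_mul, hone, one_mul]
  have half0 : 0 ≤ alf ρ n ℓ tA :=
    Finset.sum_nonneg fun y _ => mul_nonneg (hiidnn y) (by positivity)
  have hbet0 : 0 ≤ bet ρ n ℓ tB :=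
    Finset.sum_nonneg fun y _ => mul_nonneg (hiidnn y) (by positivity)
  have hc10 : 0 ≤ c1 := Finset.sum_nonneg fun y _ => mul_nonneg (hiidnn y) (hf y.1).1
  have hc20 : 0 ≤ c2 := Finset.sum_nonneg fun y _ => mul_nonneg (hiidnn y) (hg y.2).1
  have hK0 : 0 < K := by rw [hKdef]; omega
  have hKR : (0:ℝ) < (K:ℝ) := by exact_mod_cast hK0
  have hKge : 3 * (n:ℝ) * (c1 + c2) + 6 ≤ (K:ℝ) := by
    rw [hKdef]
    push_cast
    have := Nat.le_ceil (3 * (n:ℝ) * (c1 + c2))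
    linarith
  -- the protocol
  have hcard : Fintype.card (Fin n → Fin n) = n ^ n := by simp
  set eR : Fin (n ^ n) ≃ (Fin n → Fin n) := (Fintype.equivFinOfCardEq hcard).symm
    with heRdef
  have hq0 : (0:ℝ) < ((n:ℝ) ^ n)⁻¹ := by positivity
  refine ⟨n * ℓ, n ^ n, n ^ n, fun _ => ((n:ℝ) ^ n)⁻¹, fun _ => ((n:ℝ) ^ n)⁻¹,
    fun u s => ATr n ℓ K tA u (eR s), fun v s => ATr n ℓ K tB v (eR s),
    ⟨fun _ => le_of_lt hq0, ?_⟩, ⟨fun _ => le_of_lt hq0, ?_⟩, ?_, ?_, ?_⟩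
  · rw [Finset.sum_const, Finset.card_univ, Fintype.card_fin, nsmul_eq_mul]
    push_cast
    exact mul_inv_cancel₀ (by positivity)
  · rw [Finset.sum_const, Finset.card_univ, Fintype.card_fin, nsmul_eq_mul]
    push_cast
    exact mul_inv_cancel₀ (by positivity)
  · -- the success probability bound
    intro i
    dsimp only
    -- reindex the randomness sums
    have hre : ∀ x : (Fin (n*ℓ) → U) × (Fin (n*ℓ) → V),
        (∑ rA : Fin (n^n), ∑ rB : Fin (n^n),
          iid ρ (n*ℓ) x * (((n:ℝ)^n)⁻¹ * ((n:ℝ)^n)⁻¹) *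
            (if i ∈ ATr n ℓ K tA x.1 (eR rA) ∧ i ∈ ATr n ℓ K tB x.2 (eR rB)
              then (1:ℝ) else 0))
        = ∑ rA : Fin n → Fin n, ∑ rB : Fin n → Fin n,
          iid ρ (n*ℓ) x * (((n:ℝ)^n)⁻¹ * ((n:ℝ)^n)⁻¹) *
            (if i ∈ ATr n ℓ K tA x.1 rA ∧ i ∈ ATr n ℓ K tB x.2 rB then (1:ℝ) else 0) := by
      intro x
      calc
        _ = ∑ rA : Fin (n^n), ∑ rB : Fin n → Fin n,
            iid ρ (n*ℓ) x * (((n:ℝ)^n)⁻¹ * ((n:ℝ)^n)⁻¹) *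
              (if i ∈ ATr n ℓ K tA x.1 (eR rA) ∧ i ∈ ATr n ℓ K tB x.2 rB
                then (1:ℝ) else 0) := by
            refine Finset.sum_congr rfl fun rA _ => ?_
            exact Equiv.sum_comp eR (fun rB => iid ρ (n*ℓ) x *
              (((n:ℝ)^n)⁻¹ * ((n:ℝ)^n)⁻¹) *
              (if i ∈ ATr n ℓ K tA x.1 (eR rA) ∧ i ∈ ATr n ℓ K tB x.2 rB
                then (1:ℝ) else 0))
        _ = _ := by
            exact Equiv.sum_comp eR (fun rA => ∑ rB : Fin n → Fin n, iid ρ (n*ℓ) x *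
              (((n:ℝ)^n)⁻¹ * ((n:ℝ)^n)⁻¹) *
              (if i ∈ ATr n ℓ K tA x.1 rA ∧ i ∈ ATr n ℓ K tB x.2 rB
                then (1:ℝ) else 0))
    rw [Finset.sum_congr rfl fun x _ => hre x]
    -- abbreviations for coin indicators
    set q : ℝ := ((n:ℝ)^n)⁻¹ with hqdef
    -- the intermediate integrand
    set cA : (Fin (n*ℓ) → U) → (Fin n → Fin n) → Fin n → ℝ :=
      fun u r j => if (r j : ℕ) < tA (blk n ℓ j u) then (1:ℝ) else 0 with hcAdef
    set cB : (Fin (n*ℓ) → V) → (Fin n → Fin n) → Fin n → ℝ :=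
      fun v r j => if (r j : ℕ) < tB (blk n ℓ j v) then (1:ℝ) else 0 with hcBdef
    have key : ∀ (x : (Fin (n*ℓ) → U) × (Fin (n*ℓ) → V)) (rA rB : Fin n → Fin n),
        iid ρ (n*ℓ) x * ((q * q) * ((cA x.1 rA i * cB x.2 rB i)
          - (∑ j ∈ Finset.univ.erase i,
              (K:ℝ)⁻¹ * (cA x.1 rA i * cB x.2 rB i * cA x.1 rA j))
          - (∑ j ∈ Finset.univ.erase i,
              (K:ℝ)⁻¹ * (cA x.1 rA i * cB x.2 rB i * cB x.2 rB j))))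
        ≤ iid ρ (n*ℓ) x * (q * q) *
            (if i ∈ ATr n ℓ K tA x.1 rA ∧ i ∈ ATr n ℓ K tB x.2 rB then (1:ℝ) else 0) := by
      intro x rA rB
      have hpb := pointwise_bound (N := n) hK0 i (cA x.1 rA) (cB x.2 rB)
        (fun j => by rw [hcAdef]; dsimp only; split <;> simp)
        (fun j => by rw [hcBdef]; dsimp only; split <;> simp)
        ((ASet n ℓ tA x.1 rA).card) ((ASet n ℓ tB x.2 rB).card)
        (card_ASet_cast n ℓ tA x.1 rA) (card_ASet_cast n ℓ tB x.2 rB)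
        (i ∈ ATr n ℓ K tA x.1 rA) (i ∈ ATr n ℓ K tB x.2 rB)
        (by rw [mem_ATr]
            constructor
            · rintro ⟨h1, h2⟩
              exact ⟨by rw [hcAdef]; dsimp only; rw [if_pos h1], h2⟩
            · rintro ⟨h1, h2⟩
              refine ⟨?_, h2⟩
              by_contra hc
              rw [hcAdef] at h1; dsimp only at h1; rw [if_neg hc] at h1
              norm_num at h1)
        (by rw [mem_ATr]
            constructor
            · rintro ⟨h1, h2⟩
              exact ⟨by rw [hcBdef]; dsimp only; rw [if_pos h1], h2⟩
            · rintro ⟨h1, h2⟩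
              refine ⟨?_, h2⟩
              by_contra hc
              rw [hcBdef] at h1; dsimp only at h1; rw [if_neg hc] at h1
              norm_num at h1)
      calc iid ρ (n*ℓ) x * ((q * q) * _)
          ≤ iid ρ (n*ℓ) x * ((q * q) *
            (if i ∈ ATr n ℓ K tA x.1 rA ∧ i ∈ ATr n ℓ K tB x.2 rB then (1:ℝ) else 0)) := by
            refine mul_le_mul_of_nonneg_left ?_ (iid_nonneg hρ0 (n*ℓ) x)
            refine mul_le_mul_of_nonneg_left hpb ?_
            positivity
        _ = _ := by ring
    -- split the lower-bound integrand and evaluate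
    have hT0 : (∑ x : (Fin (n*ℓ) → U) × (Fin (n*ℓ) → V), ∑ rA : Fin n → Fin n,
        ∑ rB : Fin n → Fin n,
        iid ρ (n*ℓ) x * ((q * q) * (cA x.1 rA i * cB x.2 rB i)))
        = gam ρ n ℓ tA tB := by
      rw [hqdef]
      exact EF_cd ℓ hρ hn tA tB hA hB i
    have hTA : ∀ j ∈ Finset.univ.erase i,
        (∑ x : (Fin (n*ℓ) → U) × (Fin (n*ℓ) → V), ∑ rA : Fin n → Fin n,
          ∑ rB : Fin n → Fin n,
          iid ρ (n*ℓ) x * ((q * q) * ((K:ℝ)⁻¹ * (cA x.1 rA i * cB x.2 rB i * cA x.1 rA j))))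
        = (K:ℝ)⁻¹ * (gam ρ n ℓ tA tB * alf ρ n ℓ tA) := by
      intro j hj
      have hji : j ≠ i := (Finset.mem_erase.1 hj).1
      calc
        _ = ∑ x : (Fin (n*ℓ) → U) × (Fin (n*ℓ) → V), ∑ rA : Fin n → Fin n,
            ∑ rB : Fin n → Fin n, (K:ℝ)⁻¹ *
              (iid ρ (n*ℓ) x * ((q * q) * (cA x.1 rA i * cB x.2 rB i * cA x.1 rA j))) := by
            refine Finset.sum_congr rfl fun x _ => Finset.sum_congr rfl fun rA _ =>
              Finset.sum_congr rfl fun rB _ => by ring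
        _ = (K:ℝ)⁻¹ * ∑ x : (Fin (n*ℓ) → U) × (Fin (n*ℓ) → V), ∑ rA : Fin n → Fin n,
            ∑ rB : Fin n → Fin n,
              iid ρ (n*ℓ) x * ((q * q) * (cA x.1 rA i * cB x.2 rB i * cA x.1 rA j)) :=
            nested_cmul _ _
        _ = _ := by
            rw [hqdef]
            rw [EF_A ℓ hρ hn tA tB hA hB i j hji]
    have hTB : ∀ j ∈ Finset.univ.erase i,
        (∑ x : (Fin (n*ℓ) → U) × (Fin (n*ℓ) → V), ∑ rA : Fin n → Fin n,
          ∑ rB : Fin n → Fin n,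
          iid ρ (n*ℓ) x * ((q * q) * ((K:ℝ)⁻¹ * (cA x.1 rA i * cB x.2 rB i * cB x.2 rB j))))
        = (K:ℝ)⁻¹ * (gam ρ n ℓ tA tB * bet ρ n ℓ tB) := by
      intro j hj
      have hji : j ≠ i := (Finset.mem_erase.1 hj).1
      calc
        _ = ∑ x : (Fin (n*ℓ) → U) × (Fin (n*ℓ) → V), ∑ rA : Fin n → Fin n,
            ∑ rB : Fin n → Fin n, (K:ℝ)⁻¹ *
              (iid ρ (n*ℓ) x * ((q * q) * (cA x.1 rA i * cB x.2 rB i * cB x.2 rB j))) := by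
            refine Finset.sum_congr rfl fun x _ => Finset.sum_congr rfl fun rA _ =>
              Finset.sum_congr rfl fun rB _ => by ring
        _ = (K:ℝ)⁻¹ * ∑ x : (Fin (n*ℓ) → U) × (Fin (n*ℓ) → V), ∑ rA : Fin n → Fin n,
            ∑ rB : Fin n → Fin n,
              iid ρ (n*ℓ) x * ((q * q) * (cA x.1 rA i * cB x.2 rB i * cB x.2 rB j)) :=
            nested_cmul _ _
        _ = _ := by
            rw [hqdef]
            rw [EF_B ℓ hρ hn tA tB hA hB i j hji]
    have hm1 : ((Finset.univ.erase i).card : ℝ) = ((n - 1 : ℕ) : ℝ) := by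
      rw [Finset.card_erase_of_mem (Finset.mem_univ i), Finset.card_univ, Fintype.card_fin]
    have hsplit : (∑ x : (Fin (n*ℓ) → U) × (Fin (n*ℓ) → V), ∑ rA : Fin n → Fin n,
        ∑ rB : Fin n → Fin n,
        iid ρ (n*ℓ) x * ((q * q) * ((cA x.1 rA i * cB x.2 rB i)
          - (∑ j ∈ Finset.univ.erase i,
              (K:ℝ)⁻¹ * (cA x.1 rA i * cB x.2 rB i * cA x.1 rA j))
          - (∑ j ∈ Finset.univ.erase i,
              (K:ℝ)⁻¹ * (cA x.1 rA i * cB x.2 rB i * cB x.2 rB j)))))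
        = gam ρ n ℓ tA tB
          - ((n - 1 : ℕ) : ℝ) * ((K:ℝ)⁻¹ * (gam ρ n ℓ tA tB * alf ρ n ℓ tA))
          - ((n - 1 : ℕ) : ℝ) * ((K:ℝ)⁻¹ * (gam ρ n ℓ tA tB * bet ρ n ℓ tB)) := by
      calc
        _ = ∑ x : (Fin (n*ℓ) → U) × (Fin (n*ℓ) → V), ∑ rA : Fin n → Fin n,
            ∑ rB : Fin n → Fin n,
            iid ρ (n*ℓ) x * (((q * q) * (cA x.1 rA i * cB x.2 rB i))
              - (∑ j ∈ Finset.univ.erase i,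
                  (q * q) * ((K:ℝ)⁻¹ * (cA x.1 rA i * cB x.2 rB i * cA x.1 rA j)))
              - (∑ j ∈ Finset.univ.erase i,
                  (q * q) * ((K:ℝ)⁻¹ * (cA x.1 rA i * cB x.2 rB i * cB x.2 rB j)))) := by
            refine Finset.sum_congr rfl fun x _ => Finset.sum_congr rfl fun rA _ =>
              Finset.sum_congr rfl fun rB _ => ?_
            exact split_pointwise (Finset.univ.erase i) _ (q*q) _
              (fun j => (K:ℝ)⁻¹ * (cA x.1 rA i * cB x.2 rB i * cA x.1 rA j))
              (fun j => (K:ℝ)⁻¹ * (cA x.1 rA i * cB x.2 rB i * cB x.2 rB j))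
        _ = (∑ x : (Fin (n*ℓ) → U) × (Fin (n*ℓ) → V), ∑ rA : Fin n → Fin n,
              ∑ rB : Fin n → Fin n,
              iid ρ (n*ℓ) x * ((q * q) * (cA x.1 rA i * cB x.2 rB i)))
            - (∑ j ∈ Finset.univ.erase i,
                ∑ x : (Fin (n*ℓ) → U) × (Fin (n*ℓ) → V), ∑ rA : Fin n → Fin n,
                ∑ rB : Fin n → Fin n,
                iid ρ (n*ℓ) x * ((q * q) * ((K:ℝ)⁻¹ *
                  (cA x.1 rA i * cB x.2 rB i * cA x.1 rA j))))
            - (∑ j ∈ Finset.univ.erase i,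
                ∑ x : (Fin (n*ℓ) → U) × (Fin (n*ℓ) → V), ∑ rA : Fin n → Fin n,
                ∑ rB : Fin n → Fin n,
                iid ρ (n*ℓ) x * ((q * q) * ((K:ℝ)⁻¹ *
                  (cA x.1 rA i * cB x.2 rB i * cB x.2 rB j)))) :=
            nested_split (Finset.univ.erase i) (fun x => iid ρ (n*ℓ) x)
              (fun x rA rB => (q * q) * (cA x.1 rA i * cB x.2 rB i))
              (fun j x rA rB => (q * q) * ((K:ℝ)⁻¹ *
                (cA x.1 rA i * cB x.2 rB i * cA x.1 rA j)))
              (fun j x rA rB => (q * q) * ((K:ℝ)⁻¹ *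
                (cA x.1 rA i * cB x.2 rB i * cB x.2 rB j)))
        _ = _ := by
            rw [hT0, Finset.sum_congr rfl hTA, Finset.sum_congr rfl hTB,
              Finset.sum_const, Finset.sum_const, nsmul_eq_mul, nsmul_eq_mul, hm1]
    -- final arithmetic
    have hm0 : (0:ℝ) ≤ ((n - 1 : ℕ) : ℝ) := Nat.cast_nonneg _
    have hmn : ((n - 1 : ℕ) : ℝ) ≤ (n:ℝ) := by exact_mod_cast Nat.sub_le n 1
    have hD0 : 0 ≤ alf ρ n ℓ tA + bet ρ n ℓ tB := by linarith
    have h4 : (n:ℝ) * (2 * (n:ℝ)⁻¹) = 2 := by field_simp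
    have hDle : (n:ℝ) * (alf ρ n ℓ tA + bet ρ n ℓ tB) ≤ (n:ℝ) * (c1 + c2) + 2 := by
      have h1 : alf ρ n ℓ tA + bet ρ n ℓ tB ≤ c1 + c2 + 2 * (n:ℝ)⁻¹ := by linarith
      have h2 : (n:ℝ) * (alf ρ n ℓ tA + bet ρ n ℓ tB)
          ≤ (n:ℝ) * (c1 + c2 + 2 * (n:ℝ)⁻¹) := mul_le_mul_of_nonneg_left h1 (le_of_lt hn0)
      nlinarith [h2, h4]
    have h3D : 3 * (((n - 1 : ℕ) : ℝ) * (alf ρ n ℓ tA + bet ρ n ℓ tB)) ≤ (K:ℝ) := by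
      have h5 : ((n - 1 : ℕ) : ℝ) * (alf ρ n ℓ tA + bet ρ n ℓ tB)
          ≤ (n:ℝ) * (alf ρ n ℓ tA + bet ρ n ℓ tB) := mul_le_mul_of_nonneg_right hmn hD0
      nlinarith [hKge, hDle, h5]
    have e2 : (K:ℝ)⁻¹ * (((n - 1 : ℕ) : ℝ) * (alf ρ n ℓ tA + bet ρ n ℓ tB)) ≤ 1/3 := by
      have hX : ((n - 1 : ℕ) : ℝ) * (alf ρ n ℓ tA + bet ρ n ℓ tB) ≤ (K:ℝ)/3 := by linarith
      have h6 := mul_le_mul_of_nonneg_left hX (by positivity : (0:ℝ) ≤ (K:ℝ)⁻¹)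
      have hKK : (K:ℝ)⁻¹ * ((K:ℝ)/3) = 1/3 := by field_simp
      linarith
    have e3 : 0 ≤ (K:ℝ)⁻¹ * (((n - 1 : ℕ) : ℝ) * (alf ρ n ℓ tA + bet ρ n ℓ tB)) :=
      mul_nonneg (by positivity) (mul_nonneg hm0 hD0)
    have e5 : 0 ≤ (gam ρ n ℓ tA tB - p) *
        (1 - (K:ℝ)⁻¹ * (((n - 1 : ℕ) : ℝ) * (alf ρ n ℓ tA + bet ρ n ℓ tB))) :=
      mul_nonneg (by linarith [hgam_ge]) (by linarith)
    have e6 := mul_le_mul_of_nonneg_left e2 (le_of_lt hp0)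
    have hfin : p/2 ≤ gam ρ n ℓ tA tB
        - ((n - 1 : ℕ) : ℝ) * ((K:ℝ)⁻¹ * (gam ρ n ℓ tA tB * alf ρ n ℓ tA))
        - ((n - 1 : ℕ) : ℝ) * ((K:ℝ)⁻¹ * (gam ρ n ℓ tA tB * bet ρ n ℓ tB)) := by
      nlinarith [e5, e6, hp0, hgam_ge, e2, e3]
    exact le_trans (le_trans hfin (le_of_eq hsplit.symm)) (nested_mono _ _ key)

  · intro x rA _ _
    exact card_ATr_le n ℓ K tA x.1 (eR rA)
  · intro x rB _ _
    exact card_ATr_le n ℓ K tB x.2 (eR rB)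

end Main

theorem stmt7 {U V : Type} [Fintype U] [Fintype V] [Nonempty U] [Nonempty V]
    (ρ : U × V → ℝ) (hρ : IsDist ρ) (n : ℕ) (hn : 1 ≤ n)
    (p : ℝ) (hp0 : 0 < p) (hp1 : p < 1/2) :
    ((col ρ n (p/2) : ℕ∞) : ℝ≥0∞) ≤ ENNReal.ofReal (3 * n * agr ρ p + 16) := by
  classical
  have hn0 : (0:ℝ) < n := by
    have : (1:ℝ) ≤ (n:ℝ) := by exact_mod_cast hn
    linarith
  set S := { c : ℝ | ∃ (ℓ : ℕ) (f : (Fin ℓ → U) → ℝ) (g : (Fin ℓ → V) → ℝ),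
      (∀ x, f x ∈ Set.Icc (0:ℝ) 1) ∧ (∀ y, g y ∈ Set.Icc (0:ℝ) 1) ∧
      p ≤ (∑ x : (Fin ℓ → U) × (Fin ℓ → V), iid ρ ℓ x * (f x.1 * g x.2)) ∧
      c = (∑ x : (Fin ℓ → U) × (Fin ℓ → V), iid ρ ℓ x * f x.1)
        + (∑ x : (Fin ℓ → U) × (Fin ℓ → V), iid ρ ℓ x * g x.2) } with hSdef
  have hagr : agr ρ p = sInf S := rfl
  have hSne : S.Nonempty := by
    refine ⟨2, 0, fun _ => 1, fun _ => 1, fun _ => ⟨zero_le_one, le_refl 1⟩,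
      fun _ => ⟨zero_le_one, le_refl 1⟩, ?_, ?_⟩
    · have h1 := sum_iid hρ 0
      simp only [mul_one, one_mul]
      rw [h1]
      linarith
    · have h1 := sum_iid hρ 0
      simp only [mul_one]
      rw [h1]
      norm_num
  have hSlb : ∀ c ∈ S, (0:ℝ) ≤ c := by
    rintro c ⟨ℓ, f, g, hf, hg, _, rfl⟩
    have h1 : 0 ≤ ∑ x : (Fin ℓ → U) × (Fin ℓ → V), iid ρ ℓ x * f x.1 :=
      Finset.sum_nonneg fun x _ => mul_nonneg (iid_nonneg hρ.1 ℓ x) (hf x.1).1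
    have h2 : 0 ≤ ∑ x : (Fin ℓ → U) × (Fin ℓ → V), iid ρ ℓ x * g x.2 :=
      Finset.sum_nonneg fun x _ => mul_nonneg (iid_nonneg hρ.1 ℓ x) (hg x.2).1
    linarith
  have hagr0 : 0 ≤ agr ρ p := by rw [hagr]; exact Real.sInf_nonneg hSlb
  have hε : (0:ℝ) < 3 / n := by positivity
  obtain ⟨c, hcS, hclt⟩ := Real.lt_sInf_add_pos hSne hε
  rw [← hagr] at hclt
  obtain ⟨ℓ, f, g, hf, hg, hsucc, hceq⟩ := hcS
  have hcol := exists_protocol ρ hρ hn hp0 ℓ f g hf hg hsucc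
  set c1 := ∑ x : (Fin ℓ → U) × (Fin ℓ → V), iid ρ ℓ x * f x.1 with hc1
  set c2 := ∑ x : (Fin ℓ → U) × (Fin ℓ → V), iid ρ ℓ x * g x.2 with hc2
  have hc120 : 0 ≤ c1 + c2 := by
    have := hSlb c ⟨ℓ, f, g, hf, hg, hsucc, hceq⟩
    rw [hceq] at this
    exact this
  have hKreal : ((⌈3*(n:ℝ)*(c1+c2)⌉₊ + 6 : ℕ) : ℝ) ≤ 3 * n * agr ρ p + 16 := by
    push_cast
    have h2 : ((⌈3*(n:ℝ)*(c1+c2)⌉₊ : ℕ) : ℝ) < 3*(n:ℝ)*(c1+c2) + 1 :=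
      Nat.ceil_lt_add_one (by positivity)
    have h3 : 3*(n:ℝ)*(c1+c2) < 3*(n:ℝ)*(agr ρ p + 3/n) := by
      refine mul_lt_mul_of_pos_left ?_ (by positivity : (0:ℝ) < 3*(n:ℝ))
      calc c1 + c2 = c := hceq.symm
        _ < agr ρ p + 3/n := hclt
    have h4 : 3*(n:ℝ)*(agr ρ p + 3/n) = 3*n*agr ρ p + 9 := by
      field_simp
      ring
    linarith
  have hmem : ((⌈3*(n:ℝ)*(c1+c2)⌉₊ + 6 : ℕ) : ℕ∞)
      ∈ {k : ℕ∞ | ∃ m : ℕ, k = (m : ℕ∞) ∧ ColLE ρ n (p/2) m} :=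
    ⟨⌈3*(n:ℝ)*(c1+c2)⌉₊ + 6, rfl, hcol⟩
  have hcolle : col ρ n (p/2) ≤ ((⌈3*(n:ℝ)*(c1+c2)⌉₊ + 6 : ℕ) : ℕ∞) := sInf_le hmem
  calc ((col ρ n (p/2) : ℕ∞) : ℝ≥0∞)
      ≤ (((⌈3*(n:ℝ)*(c1+c2)⌉₊ + 6 : ℕ) : ℕ∞) : ℝ≥0∞) := ENat.toENNReal_le.2 hcolle
    _ = ENNReal.ofReal ((⌈3*(n:ℝ)*(c1+c2)⌉₊ + 6 : ℕ) : ℝ) := by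
        rw [ENat.toENNReal_coe, ENNReal.ofReal_natCast]
    _ ≤ ENNReal.ofReal (3 * n * agr ρ p + 16) := ENNReal.ofReal_le_ofReal hKreal

end SR
end
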